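/- arXiv:2210.15312 — 3 statements merged into one kernel-verified Lean document; each statement's English description precedes it below -/
import Mathlib

section
/- For any Coxeter system (W,S) with longest element w_0 (W finite) and any x, y ∈ W, if r_{x,y} ≠ 0 then x ≥ y in the Bruhat order, and each monomial v^k appearing in r_{x,y} satisfies k ≡ ℓ(x) - ℓ(y) (mod 2) and ℓ(y) - ℓ(x) ≤ k ≤ ℓ(x) - ℓ(y). -/
open LaurentPolynomial

/-- The coefficient of `v^k` in a Laurent polynomial over `ℤ`. -/
noncomputable def lcoeff (p : LaurentPolynomial ℤ) (k : ℤ) : ℤ := (AddMonoidAlgebra.coeff p) k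

/-- The Bruhat order on a Coxeter group: `x ≤ y` iff `y` is obtained from `x` by
successively multiplying by reflections that increase the length. -/
inductive BruhatLE {B W : Type*} [Group W] {M : CoxeterMatrix B} (cs : CoxeterSystem M W) :
    W → W → Prop
  | refl (x : W) : BruhatLE cs x x
  | step (x y t : W) : cs.IsReflection t → cs.length x < cs.length (x * t) →
      BruhatLE cs (x * t) y → BruhatLE cs x y


namespace RPolyAux

open CoxeterSystem List


theorem lcoeff_add (p q : LaurentPolynomial ℤ) (k : ℤ) :
    lcoeff (p + q) k = lcoeff p k + lcoeff q k := by
  unfold lcoeff; rw [AddMonoidAlgebra.coeff_add]; exact Finsupp.add_apply _ _ k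

theorem lcoeff_one (k : ℤ) : lcoeff (1 : LaurentPolynomial ℤ) k ≠ 0 → k = 0 := by
  intro h
  by_contra hk
  apply h
  show (Finsupp.single (0:ℤ) (1:ℤ)) k = 0
  rw [Finsupp.single_apply, if_neg (by omega)]

theorem lcoeff_shift (p : LaurentPolynomial ℤ) (k : ℤ) :
    lcoeff ((T (-1) - T 1) * p) k = lcoeff p (k + 1) - lcoeff p (k - 1) := by
  have : (T (-1) - T 1) * p = T (-1) * p - T 1 * p := by ring
  rw [this]
  have h1 : lcoeff (T (-1) * p) k = lcoeff p (k + 1) := by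
    show (AddMonoidAlgebra.single (-1:ℤ) (1:ℤ) * p).coeff k = _
    rw [AddMonoidAlgebra.coeff_single_mul_apply p (1:ℤ) (-1:ℤ) k, one_mul]
    norm_num [lcoeff, add_comm]
  have h2 : lcoeff (T 1 * p) k = lcoeff p (k - 1) := by
    show (AddMonoidAlgebra.single (1:ℤ) (1:ℤ) * p).coeff k = _
    rw [AddMonoidAlgebra.coeff_single_mul_apply p (1:ℤ) (1:ℤ) k, one_mul]
    norm_num [lcoeff, sub_eq_neg_add]
  rw [← h1, ← h2]
  unfold lcoeff; rw [AddMonoidAlgebra.coeff_sub]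
  exact Finsupp.sub_apply _ _ _


variable {B W : Type*} [Group W] [DecidableEq W] {M : CoxeterMatrix B} (cs : CoxeterSystem M W)

local prefix:100 "σ" => cs.simple
local prefix:100 "π" => cs.wordProd
local prefix:100 "ℓ" => cs.length

/-- Sign flip function for the reflection representation. -/
def mu (i : B) (t : W) : ℤˣ := if t = cs.simple i then -1 else 1

theorem mu_conj_invol (i : B) (t : W) : mu cs i (σ i * t * σ i) = mu cs i t := by
  unfold mu
  congr 1
  simp only [eq_iff_iff]
  constructor
  · intro h
    have := congrArg (fun z => σ i * z * σ i) h
    rw [show σ i * (σ i * t * σ i) * σ i = (σ i * σ i) * t * (σ i * σ i) by group,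
      cs.simple_mul_simple_self] at this
    simpa using this
  · intro h
    subst h
    rw [show σ i * (σ i) * σ i = σ i by rw [cs.simple_mul_simple_self, one_mul]]

/-- The permutation of `W × ℤˣ` associated to the simple reflection `i`. -/
def refPerm (i : B) : Equiv.Perm (W × ℤˣ) :=
  Function.Involutive.toPerm
    (fun p => (σ i * p.1 * σ i, mu cs i p.1 * p.2))
    (by
      intro p
      refine Prod.ext ?_ ?_
      · show σ i * (σ i * p.1 * σ i) * σ i = p.1
        rw [show σ i * (σ i * p.1 * σ i) * σ i = (σ i * σ i) * p.1 * (σ i * σ i) by group,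
          cs.simple_mul_simple_self]
        simp
      · show mu cs i (σ i * p.1 * σ i) * (mu cs i p.1 * p.2) = p.2
        rw [mu_conj_invol, ← mul_assoc]
        rcases (Int.units_eq_one_or (mu cs i p.1)) with h | h <;> rw [h] <;> simp)

theorem refPerm_apply (i : B) (p : W × ℤˣ) :
    refPerm cs i p = (σ i * p.1 * σ i, mu cs i p.1 * p.2) := rfl

theorem refPerm_liftable : M.IsLiftable (fun i => refPerm cs i) := by
  intro i i'
  set a := σ i with ha
  set b := σ i' with hb
  set m := M i i' with hm
  set c := a * b with hc
  have hbb : b * b = 1 := cs.simple_mul_simple_self i'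
  have hbinv : b⁻¹ = b := cs.inv_simple i'
  have hainv : a⁻¹ = a := cs.inv_simple i
  have hcinv : c⁻¹ = b * a := by rw [hc, mul_inv_rev, hbinv, hainv]
  -- moving b across powers of c
  have hmove : ∀ j : ℕ, (c ^ j)⁻¹ * b = b * c ^ j := by
    intro j
    have h1 : b * c * b⁻¹ = c⁻¹ := by
      rw [hbinv, hc, hcinv, show b * (a * b) * b = b * a * (b * b) by group, hbb, mul_one]
    have h2 := map_pow (MulAut.conj b) c j
    simp only [MulAut.conj_apply, h1, inv_pow] at h2
    -- h2 : b * c ^ j * b⁻¹ = (c ^ j)⁻¹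
    rw [← h2]
    group
  have e1 : ∀ k : ℕ, (c ^ k)⁻¹ * b * c ^ k = b * c ^ (2 * k) := by
    intro k
    rw [hmove k, mul_assoc, ← pow_add, two_mul]
  have e2 : ∀ k : ℕ, (c ^ k)⁻¹ * (b * a * b) * c ^ k = b * c ^ (2 * k + 1) := by
    intro k
    have hbab : b * a * b = b * c := by rw [hc, mul_assoc]
    rw [hbab, ← mul_assoc, hmove k, mul_assoc, mul_assoc]
    congr 1
    rw [← pow_succ', ← pow_add]
    congr 1
    ring
  have key1 : ∀ (k : ℕ) (t : W), (c ^ k * t * (c ^ k)⁻¹ = b) ↔ (t = b * c ^ (2 * k)) := by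
    intro k t
    rw [← e1 k]
    constructor
    · intro h; rw [← h]; group
    · intro h; rw [h]; group
  have key2 : ∀ (k : ℕ) (t : W),
      (b * (c ^ k * t * (c ^ k)⁻¹) * b = a) ↔ (t = b * c ^ (2 * k + 1)) := by
    intro k t
    rw [← e2 k]
    constructor
    · intro h
      have : c ^ k * t * (c ^ k)⁻¹ = b * a * b := by
        rw [← h, show b * (b * (c ^ k * t * (c ^ k)⁻¹) * b) * b =
          (b * b) * (c ^ k * t * (c ^ k)⁻¹) * (b * b) by group, hbb, one_mul, mul_one]
      rw [← this]
      group
    · intro h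
      rw [h, show b * (c ^ k * ((c ^ k)⁻¹ * (b * a * b) * c ^ k) * (c ^ k)⁻¹) * b =
        b * (b * a * b) * b by group, show b * (b * a * b) * b = (b * b) * a * (b * b) by group,
        hbb, one_mul, mul_one]
  have iter : ∀ (k : ℕ) (t : W) (ε : ℤˣ),
      ((refPerm cs i * refPerm cs i') ^ k) (t, ε) =
      (c ^ k * t * (c ^ k)⁻¹,
        (∏ j ∈ Finset.range (2 * k), (if t = b * c ^ j then (-1 : ℤˣ) else 1)) * ε) := by
    intro k
    induction k with
    | zero => intro t ε; simp
    | succ n ih =>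
      intro t ε
      rw [pow_succ', Equiv.Perm.mul_apply, ih t ε, Equiv.Perm.mul_apply,
        refPerm_apply, refPerm_apply]
      refine Prod.ext ?_ ?_
      · show a * (b * (c ^ n * t * (c ^ n)⁻¹) * b) * a = c ^ (n+1) * t * (c ^ (n+1))⁻¹
        rw [show c ^ (n+1) * t * (c ^ (n+1))⁻¹ = c * (c ^ n * t * (c ^ n)⁻¹) * c⁻¹ by
          rw [pow_succ']; group, hc, hcinv]
        group
      · show mu cs i (b * (c ^ n * t * (c ^ n)⁻¹) * b) *
          (mu cs i' (c ^ n * t * (c ^ n)⁻¹) *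
            ((∏ j ∈ Finset.range (2 * n), (if t = b * c ^ j then (-1 : ℤˣ) else 1)) * ε)) = _
        have hm1 : mu cs i' (c ^ n * t * (c ^ n)⁻¹) =
            (if t = b * c ^ (2 * n) then (-1 : ℤˣ) else 1) := by
          unfold mu
          rw [← hb, if_congr (key1 n t) rfl rfl]
        have hm2 : mu cs i (b * (c ^ n * t * (c ^ n)⁻¹) * b) =
            (if t = b * c ^ (2 * n + 1) then (-1 : ℤˣ) else 1) := by
          unfold mu
          rw [← ha, if_congr (key2 n t) rfl rfl]
        rw [hm1, hm2, show 2 * (n + 1) = (2 * n + 1) + 1 by ring, Finset.prod_range_succ,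
          Finset.prod_range_succ]
        simp [mul_comm, mul_left_comm, mul_assoc]
  have hrel : c ^ m = 1 := by rw [hc, hm]; exact cs.simple_mul_simple_pow i i'
  apply Equiv.ext
  intro p
  obtain ⟨t, ε⟩ := p
  show ((refPerm cs i * refPerm cs i') ^ m) (t, ε) = (1 : Equiv.Perm (W × ℤˣ)) (t, ε)
  rw [iter m t ε]
  have hsign : (∏ j ∈ Finset.range (2 * m), (if t = b * c ^ j then (-1 : ℤˣ) else 1)) = 1 := by
    rw [two_mul, Finset.prod_range_add]
    have : ∀ j : ℕ, (if t = b * c ^ (m + j) then (-1 : ℤˣ) else 1) =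
        (if t = b * c ^ j then (-1 : ℤˣ) else 1) := by
      intro j
      rw [pow_add, hrel, one_mul]
    simp only [this]
    exact Int.units_mul_self _
  rw [hsign, hrel]
  simp

/-- The reflection representation on `W × ℤˣ`. -/
noncomputable def sgm : W →* Equiv.Perm (W × ℤˣ) :=
  CoxeterSystem.lift cs ⟨fun i => refPerm cs i, refPerm_liftable cs⟩

theorem sgm_simple (i : B) : sgm cs (σ i) = refPerm cs i :=
  CoxeterSystem.lift_apply_simple cs (refPerm_liftable cs) i

/-- The sign of the reflection `t` in `w`. -/
noncomputable def nn (w t : W) : ℤˣ := ((sgm cs w) (t, 1)).2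

theorem sgm_apply (w : W) : ∀ (t : W) (ε : ℤˣ),
    (sgm cs w) (t, ε) = (w * t * w⁻¹, nn cs w t * ε) := by
  induction w using cs.simple_induction_left with
  | one =>
    intro t ε
    simp [nn]
  | mul_simple_left w i ih =>
    intro t ε
    rw [map_mul, Equiv.Perm.mul_apply, ih t ε, sgm_simple, refPerm_apply]
    have h2 : nn cs (σ i * w) t = mu cs i (w * t * w⁻¹) * nn cs w t := by
      unfold nn
      rw [map_mul, Equiv.Perm.mul_apply, ih t 1, sgm_simple, refPerm_apply]
    refine Prod.ext ?_ ?_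
    · show σ i * (w * t * w⁻¹) * σ i = σ i * w * t * (σ i * w)⁻¹
      rw [mul_inv_rev, cs.inv_simple]
      group
    · show mu cs i (w * t * w⁻¹) * (nn cs w t * ε) = nn cs (σ i * w) t * ε
      rw [h2]
      exact (mul_assoc _ _ _).symm

theorem nn_mul (w₁ w₂ t : W) : nn cs (w₁ * w₂) t = nn cs w₂ t * nn cs w₁ (w₂ * t * w₂⁻¹) := by
  have h1 : (sgm cs (w₁ * w₂)) (t, 1) = (w₁ * w₂ * t * (w₁ * w₂)⁻¹, nn cs (w₁ * w₂) t * 1) :=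
    sgm_apply cs (w₁ * w₂) t 1
  have h2 : (sgm cs (w₁ * w₂)) (t, 1) = (sgm cs w₁) ((sgm cs w₂) (t, 1)) := by
    rw [map_mul]; rfl
  rw [sgm_apply cs w₂ t 1, sgm_apply cs w₁ (w₂ * t * w₂⁻¹) (nn cs w₂ t * 1)] at h2
  have := (h1.symm.trans h2)
  have h3 := congrArg Prod.snd this
  simp only [mul_one] at h3 ⊢
  rw [h3, mul_comm]

theorem nn_simple (i : B) (t : W) : nn cs (σ i) t = mu cs i t := by
  unfold nn
  rw [sgm_simple, refPerm_apply, mul_one]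

theorem nn_wordProd (ω : List B) (t : W) :
    nn cs (π ω) t = ((cs.rightInvSeq ω).map (fun u => if u = t then (-1 : ℤˣ) else 1)).prod := by
  induction ω with
  | nil =>
    show nn cs (π []) t = 1
    rw [cs.wordProd_nil]
    unfold nn
    simp
  | cons i ω ih =>
    rw [cs.wordProd_cons, nn_mul cs (σ i) (π ω) t, ih, nn_simple]
    show _ * (if π ω * t * (π ω)⁻¹ = σ i then (-1 : ℤˣ) else 1) = _
    have : cs.rightInvSeq (i :: ω) = ((π ω)⁻¹ * σ i * π ω) :: cs.rightInvSeq ω := rfl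
    rw [this, List.map_cons, List.prod_cons]
    have hiff : ((π ω)⁻¹ * σ i * π ω = t) ↔ (π ω * t * (π ω)⁻¹ = σ i) := by
      constructor
      · intro h; rw [← h]; group
      · intro h; rw [← h]; group
    rw [if_congr hiff rfl rfl, mul_comm]

theorem nn_refl_self {t : W} (ht : cs.IsReflection t) : nn cs t t = -1 := by
  obtain ⟨w, j, hw⟩ := ht
  have h1 : (sgm cs w⁻¹) (t, 1) = (σ j, nn cs w⁻¹ t) := by
    rw [sgm_apply cs w⁻¹ t 1, mul_one]
    congr 1
    rw [hw]
    group
  have h2 : (sgm cs w) (σ j, nn cs w⁻¹ t) = (t, 1) := by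
    rw [← h1, ← Equiv.Perm.mul_apply, ← map_mul, mul_inv_cancel, map_one, Equiv.Perm.one_apply]
  have h3 : (sgm cs w) (σ j, nn cs w⁻¹ t) = (w * σ j * w⁻¹, nn cs w (σ j) * nn cs w⁻¹ t) :=
    sgm_apply cs w (σ j) _
  have h4 : nn cs w (σ j) * nn cs w⁻¹ t = 1 := by
    rw [h3] at h2
    exact congrArg Prod.snd h2
  have h5 : (sgm cs t) (t, 1) = (sgm cs w) ((sgm cs (σ j)) ((sgm cs w⁻¹) (t, 1))) := by
    rw [hw]
    rw [map_mul, map_mul, Equiv.Perm.mul_apply, Equiv.Perm.mul_apply]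
  rw [h1, sgm_simple, refPerm_apply] at h5
  rw [show mu cs j (σ j) = -1 from by unfold mu; rw [if_pos rfl]] at h5
  have h6 : σ j * σ j * σ j = σ j := by rw [cs.simple_mul_simple_self, one_mul]
  rw [show (σ j * (σ j) * σ j, (-1 : ℤˣ) * nn cs w⁻¹ t) = (σ j, -(nn cs w⁻¹ t)) by
    rw [h6]; congr 1; simp] at h5
  rw [sgm_apply cs w (σ j) (-(nn cs w⁻¹ t))] at h5
  have h7 := congrArg Prod.snd h5
  simp only at h7
  show ((sgm cs t) (t, 1)).2 = -1
  rw [h7, mul_neg, h4]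

theorem nn_eq_neg (w t : W) (ht : cs.IsReflection t) : nn cs w t = - nn cs (w * t) t := by
  conv_lhs => rw [show w = w * t * t by rw [mul_assoc, ht.mul_self, mul_one]]
  rw [nn_mul cs (w * t) t t, show t * t * t⁻¹ = t by rw [ht.mul_self, one_mul, ht.inv],
    nn_refl_self cs ht]
  simp

theorem nn_neg_of_descent {t : W} (ht : cs.IsReflection t) {w : W}
    (h : ℓ (w * t) < ℓ w) : nn cs w t = -1 := by
  obtain ⟨ω, hred, hw'⟩ := cs.exists_reduced_word' (w * t)
  have hone : nn cs (w * t) t = 1 := by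
    rw [hw', nn_wordProd]
    apply List.prod_eq_one
    intro x hx
    obtain ⟨u, hu, rfl⟩ := List.mem_map.mp hx
    rw [if_neg]
    intro rfl'
    subst rfl'
    have h2 := (cs.isRightInversion_of_mem_rightInvSeq hred hu).2
    rw [← hw'] at h2
    rw [mul_assoc, ht.mul_self, mul_one] at h2
    omega
  rw [nn_eq_neg cs w t ht, hone]

theorem nn_descent_iff {t : W} (ht : cs.IsReflection t) (w : W) :
    nn cs w t = -1 ↔ ℓ (w * t) < ℓ w := by
  constructor
  · intro h
    rcases Nat.lt_or_gt_of_ne (ht.length_mul_left_ne w) with h1 | h1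
    · exact h1
    · exfalso
      have h2 : ℓ (w * t * t) < ℓ (w * t) := by
        rw [mul_assoc, ht.mul_self, mul_one]; exact h1
      have h3 := nn_neg_of_descent cs ht h2
      rw [nn_eq_neg cs w t ht, h3] at h
      norm_num at h
  · exact nn_neg_of_descent cs ht

theorem nn_ascent_iff {t : W} (ht : cs.IsReflection t) (w : W) :
    nn cs w t = 1 ↔ ℓ w < ℓ (w * t) := by
  constructor
  · intro h
    rcases Nat.lt_or_gt_of_ne (ht.length_mul_left_ne w) with h1 | h1
    · rw [(nn_descent_iff cs ht w).mpr h1] at h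
      norm_num at h
    · exact h1
  · intro h
    rcases Int.units_eq_one_or (nn cs w t) with h1 | h1
    · exact h1
    · rw [nn_descent_iff cs ht w] at h1
      omega

theorem mem_ris_of_descent {ω : List B} (hred : cs.IsReduced ω) {t : W}
    (ht : cs.IsReflection t) (h : ℓ (π ω * t) < ℓ (π ω)) : t ∈ cs.rightInvSeq ω := by
  by_contra hmem
  have h1 : nn cs (π ω) t = 1 := by
    rw [nn_wordProd]
    apply List.prod_eq_one
    intro x hx
    obtain ⟨u, hu, rfl⟩ := List.mem_map.mp hx
    rw [if_neg]
    intro rfl'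
    exact hmem (rfl' ▸ hu)
  have h2 := nn_neg_of_descent cs ht h
  rw [h1] at h2
  norm_num at h2

/-- Strong exchange property. -/
theorem strong_exchange {ω : List B} (hred : cs.IsReduced ω) {t : W}
    (ht : cs.IsReflection t) (h : ℓ (π ω * t) < ℓ (π ω)) :
    ∃ j, j < ω.length ∧ π (ω.eraseIdx j) = π ω * t := by
  have hmem := mem_ris_of_descent cs hred ht h
  obtain ⟨j, hj, hjt⟩ := List.mem_iff_getElem.mp hmem
  rw [cs.length_rightInvSeq] at hj
  refine ⟨j, hj, ?_⟩
  rw [← cs.wordProd_mul_getD_rightInvSeq ω j]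
  congr 1
  rw [List.getD_eq_getElem _ 1 (by rw [cs.length_rightInvSeq]; exact hj), hjt]

section Bruhat

theorem bruhat_trans {u v z : W} (h1 : BruhatLE cs u v) (h2 : BruhatLE cs v z) :
    BruhatLE cs u z := by
  induction h1 with
  | refl x => exact h2
  | step x y t ht hlt h ih => exact .step x z t ht hlt (ih h2)

theorem bruhat_arrow_right {z t : W} (ht : cs.IsReflection t) (h : ℓ z < ℓ (z * t)) :
    BruhatLE cs z (z * t) := .step z (z * t) t ht h (.refl _)

theorem arrow_left (i : B) (z : W) (h : ℓ z < ℓ (σ i * z)) : BruhatLE cs z (σ i * z) := by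
  have hr : cs.IsReflection (z⁻¹ * σ i * z) := by
    have := (cs.isReflection_simple i).conj z⁻¹
    simpa using this
  have he : z * (z⁻¹ * σ i * z) = σ i * z := by group
  refine .step z (σ i * z) _ hr ?_ (by rw [he]; exact .refl _)
  rw [he]; exact h

theorem arrow_left' (i : B) (z : W) (h : ℓ (σ i * z) < ℓ z) : BruhatLE cs (σ i * z) z := by
  have h2 : ℓ (σ i * z) < ℓ (σ i * (σ i * z)) := by
    rw [cs.simple_mul_simple_cancel_left]; exact h
  have := arrow_left cs i (σ i * z) h2
  rwa [cs.simple_mul_simple_cancel_left] at this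

theorem bruhat_inv {u v : W} (h : BruhatLE cs u v) : BruhatLE cs u⁻¹ v⁻¹ := by
  induction h with
  | refl x => exact .refl _
  | step x y t ht hlt h ih =>
    have hr : cs.IsReflection (x * t * x⁻¹) := ht.conj x
    have he : x⁻¹ * (x * t * x⁻¹) = (x * t)⁻¹ := by
      rw [mul_inv_rev, ht.inv]; group
    refine .step x⁻¹ y⁻¹ (x * t * x⁻¹) hr ?_ (by rw [he]; exact ih)
    rw [he, cs.length_inv, cs.length_inv]
    exact hlt

theorem exists_reduced_sublist_aux :
    ∀ (n : ℕ) (ω : List B), ω.length ≤ n →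
      ∃ σ', σ' <+ ω ∧ cs.IsReduced σ' ∧ π σ' = π ω := by
  intro n
  induction n with
  | zero =>
    intro ω hlen
    rw [Nat.le_zero, List.length_eq_zero_iff] at hlen
    subst hlen
    exact ⟨[], List.Sublist.refl _, by simp [CoxeterSystem.IsReduced], rfl⟩
  | succ n ih =>
    intro ω hlen
    rcases List.eq_nil_or_concat ω with rfl | ⟨l, a, rfl⟩
    · exact ⟨[], List.Sublist.refl _, by simp [CoxeterSystem.IsReduced], rfl⟩
    · simp only [List.concat_eq_append] at hlen ⊢
      obtain ⟨σ₀, hsub, hred, hprod⟩ := ih l (by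
        rw [List.length_append] at hlen; simp at hlen; omega)
      have hπω : π (l ++ [a]) = π l * σ a := by
        rw [cs.wordProd_append, cs.wordProd_singleton]
      rcases Nat.lt_or_gt_of_ne (cs.length_mul_simple_ne (π l) a) with hdesc | hasc
      · -- descent : exchange
        have hd : ℓ (π σ₀ * σ a) < ℓ (π σ₀) := by rw [hprod]; exact hdesc
        obtain ⟨j, hj, hje⟩ := strong_exchange cs hred (cs.isReflection_simple a) hd
        obtain ⟨σ', hs', hr', hp'⟩ := ih (σ₀.eraseIdx j) (by
          have h1 : (σ₀.eraseIdx j).length ≤ σ₀.length := (List.eraseIdx_sublist σ₀ j).length_le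
          have h2 : σ₀.length ≤ l.length := hsub.length_le
          rw [List.length_append] at hlen; simp at hlen; omega)
        refine ⟨σ', ?_, hr', ?_⟩
        · exact (hs'.trans ((List.eraseIdx_sublist σ₀ j).trans hsub)).trans
            (List.sublist_append_left l [a])
        · rw [hp', hje, hprod, hπω]
      · -- ascent
        refine ⟨σ₀ ++ [a], hsub.append (List.Sublist.refl [a]), ?_, ?_⟩
        · show ℓ (π (σ₀ ++ [a])) = (σ₀ ++ [a]).length
          rw [cs.wordProd_append, cs.wordProd_singleton, hprod, List.length_append]
          have h1 : ℓ (π l * σ a) = ℓ (π l) + 1 := by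
            rcases cs.length_mul_simple (π l) a with h | h
            · exact h
            · omega
          have h2 : σ₀.length = ℓ (π l) := by rw [← hprod]; exact hred.symm
          simp [h1, h2]
        · rw [cs.wordProd_append, cs.wordProd_singleton, hprod, hπω]

theorem exists_reduced_sublist (ω : List B) :
    ∃ σ', σ' <+ ω ∧ cs.IsReduced σ' ∧ π σ' = π ω :=
  exists_reduced_sublist_aux cs ω.length ω (le_refl _)

theorem le_subword {u v : W} (h : BruhatLE cs u v) :
    ∀ ω, cs.IsReduced ω → π ω = v → ∃ σ', σ' <+ ω ∧ cs.IsReduced σ' ∧ π σ' = u := by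
  induction h with
  | refl x => exact fun ω hred hπ => ⟨ω, List.Sublist.refl _, hred, hπ⟩
  | step x y t ht hlt h ih =>
    intro ω hred hπ
    obtain ⟨σ₁, hs1, hr1, hp1⟩ := ih ω hred hπ
    have hd : ℓ (π σ₁ * t) < ℓ (π σ₁) := by
      rw [hp1, mul_assoc, ht.mul_self, mul_one]
      exact hlt
    obtain ⟨j, hj, hje⟩ := strong_exchange cs hr1 ht hd
    obtain ⟨σ', hs', hr', hp'⟩ := exists_reduced_sublist cs (σ₁.eraseIdx j)
    refine ⟨σ', (hs'.trans (List.eraseIdx_sublist σ₁ j)).trans hs1, hr', ?_⟩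
    rw [hp', hje, hp1, mul_assoc, ht.mul_self, mul_one]

/-- Single-arrow lifting, part 1 : `σ i * x ≤ x * t`. -/
theorem sa_AD1 {x t : W} (ht : cs.IsReflection t) (i : B)
    (hxt : ℓ x < ℓ (x * t)) (hsx : ℓ x < ℓ (σ i * x)) (hsy : ℓ (σ i * (x * t)) < ℓ (x * t)) :
    BruhatLE cs (σ i * x) (x * t) := by
  by_cases hc : x * t * x⁻¹ = σ i
  · have : σ i * x = x * t := by rw [← hc]; group
    rw [this]
    exact .refl _
  · have h1 : nn cs (σ i * x) t = 1 := by
      rw [nn_mul cs (σ i) x t, nn_simple]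
      rw [(nn_ascent_iff cs ht x).mpr hxt, one_mul]
      unfold mu
      rw [if_neg (by intro hcc; exact hc hcc)]
    have h2 : ℓ (σ i * x) < ℓ (σ i * x * t) := (nn_ascent_iff cs ht _).mp h1
    refine .step _ _ t ht h2 ?_
    have he : σ i * x * t = σ i * (x * t) := by group
    rw [he]
    exact arrow_left' cs i (x * t) hsy

/-- Single-arrow lifting, part 2 : `x ≤ σ i * (x * t)`. -/
theorem sa_AD2 {x t : W} (ht : cs.IsReflection t) (i : B)
    (hxt : ℓ x < ℓ (x * t)) (hsx : ℓ x < ℓ (σ i * x)) (hsy : ℓ (σ i * (x * t)) < ℓ (x * t)) :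
    BruhatLE cs x (σ i * (x * t)) := by
  obtain ⟨τ, hτred, hτ⟩ := cs.exists_reduced_word' (σ i * (x * t))
  have hlsy : ℓ (σ i * (x * t)) + 1 = ℓ (x * t) := by
    rcases cs.length_simple_mul (x * t) i with h | h
    · omega
    · exact h
  have hπω : π (i :: τ) = x * t := by
    rw [cs.wordProd_cons, ← hτ, cs.simple_mul_simple_cancel_left]
  have hωred : cs.IsReduced (i :: τ) := by
    show ℓ (π (i :: τ)) = (i :: τ).length
    rw [hπω, List.length_cons, ← hτred, ← hτ]
    omega
  have hd : ℓ (π (i :: τ) * t) < ℓ (π (i :: τ)) := by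
    rw [hπω, mul_assoc, ht.mul_self, mul_one]
    exact hxt
  obtain ⟨j, hj, hje⟩ := strong_exchange cs hωred ht hd
  rw [hπω, mul_assoc, ht.mul_self, mul_one] at hje
  -- hje : π ((i::τ).eraseIdx j) = x
  match j, hj with
  | 0, hj =>
    rw [show (i::τ).eraseIdx 0 = τ from rfl, ← hτ] at hje
    rw [hje]
    exact BruhatLE.refl _
  | (j+1), hj =>
    rw [show (i::τ).eraseIdx (j+1) = i :: τ.eraseIdx j from rfl, cs.wordProd_cons] at hje
    have hj' : j < τ.length := by simp at hj; omega
    set t' := (cs.rightInvSeq τ).getD j 1 with ht'def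
    have ht'mem : t' ∈ cs.rightInvSeq τ := by
      rw [ht'def, List.getD_eq_getElem _ 1 (by rw [cs.length_rightInvSeq]; exact hj')]
      exact List.getElem_mem _
    have ht' : cs.IsReflection t' := cs.isReflection_of_mem_rightInvSeq τ ht'mem
    have he2 : π (τ.eraseIdx j) = π τ * t' := (cs.wordProd_mul_getD_rightInvSeq τ j).symm
    have hsix : σ i * x = (σ i * (x * t)) * t' := by
      rw [hτ, ← he2, ← hje, cs.simple_mul_simple_cancel_left]
    have hlsx : ℓ (σ i * x) = ℓ x + 1 := by
      rcases cs.length_simple_mul x i with h | h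
      · exact h
      · omega
    have hne : ℓ (σ i * x) ≠ ℓ (σ i * (x * t)) := by
      rw [hsix]
      exact ht'.length_mul_left_ne _
    rcases Nat.lt_or_gt_of_ne hne with hlt2 | hgt2
    · -- σ i * x < σ i * (x*t) : chain x → σ i x → σ i (x t)
      refine bruhat_trans cs (arrow_left cs i x hsx) ?_
      have he3 : σ i * (x * t) = (σ i * x) * t' := by
        rw [hsix, mul_assoc, ht'.mul_self, mul_one]
      rw [he3]
      refine bruhat_arrow_right cs ht' ?_
      rw [← he3]
      exact hlt2
    · -- pinch : forces x * t = σ i * x, hence x = σ i * (x * t)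
      have hpin : ℓ (σ i * (x * t)) = ℓ x := by omega
      have hdesc : ℓ (σ i * x * t) < ℓ (σ i * x) := by
        rw [mul_assoc, hpin, hlsx]
        omega
      have hnn : nn cs (σ i * x) t = -1 := (nn_descent_iff cs ht _).mpr hdesc
      rw [nn_mul cs (σ i) x t, nn_simple, (nn_ascent_iff cs ht x).mpr hxt, one_mul] at hnn
      by_cases hc : x * t * x⁻¹ = σ i
      · have hxt2 : x * t = σ i * x := by rw [← hc]; group
        rw [hxt2, cs.simple_mul_simple_cancel_left]
        exact .refl _
      · unfold mu at hnn
        rw [if_neg hc] at hnn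
        norm_num at hnn

theorem bruhat_left_lift (i : B) {u v : W} (h : BruhatLE cs u v) :
    (ℓ u < ℓ (σ i * u) → ℓ (σ i * v) < ℓ v →
      BruhatLE cs (σ i * u) v ∧ BruhatLE cs u (σ i * v)) ∧
    (ℓ u < ℓ (σ i * u) → ℓ v < ℓ (σ i * v) → BruhatLE cs (σ i * u) (σ i * v)) ∧
    (ℓ (σ i * u) < ℓ u → ℓ (σ i * v) < ℓ v → BruhatLE cs (σ i * u) (σ i * v)) := by
  induction h with
  | refl x =>
    exact ⟨fun h1 h2 => absurd (h1.trans h2) (lt_irrefl _), fun _ _ => BruhatLE.refl _,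
      fun _ _ => BruhatLE.refl _⟩
  | step x y t ht hlt hch ih =>
    obtain ⟨ih1, ih2, ih3⟩ := ih
    have harr : ℓ (x * t) < ℓ (σ i * (x * t)) → ℓ x < ℓ (σ i * x) →
        ℓ (σ i * x) < ℓ (σ i * x * t) := by
      intro hw hu
      have e1 : ℓ (σ i * x) = ℓ x + 1 := by
        rcases cs.length_simple_mul x i with h' | h' <;> omega
      have e2 : ℓ (σ i * (x * t)) = ℓ (x * t) + 1 := by
        rcases cs.length_simple_mul (x * t) i with h' | h' <;> omega
      rw [mul_assoc]
      omega
    refine ⟨?_, ?_, ?_⟩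
    · intro hu hv
      rcases Nat.lt_or_gt_of_ne (cs.length_simple_mul_ne (x * t) i) with hw | hw
      · exact ⟨bruhat_trans cs (sa_AD1 cs ht i hlt hu hw) hch,
          bruhat_trans cs (sa_AD2 cs ht i hlt hu hw) (ih3 hw hv)⟩
      · obtain ⟨c1, c2⟩ := ih1 hw hv
        refine ⟨?_, BruhatLE.step x _ t ht hlt c2⟩
        refine BruhatLE.step _ _ t ht (harr hw hu) ?_
        rw [mul_assoc]
        exact c1
    · intro hu hv
      rcases Nat.lt_or_gt_of_ne (cs.length_simple_mul_ne (x * t) i) with hw | hw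
      · exact bruhat_trans cs (sa_AD1 cs ht i hlt hu hw)
          (bruhat_trans cs hch (arrow_left cs i y hv))
      · refine BruhatLE.step _ _ t ht (harr hw hu) ?_
        rw [mul_assoc]
        exact ih2 hw hv
    · intro hu hv
      rcases Nat.lt_or_gt_of_ne (cs.length_simple_mul_ne (x * t) i) with hw | hw
      · have e1 : ℓ (σ i * x) + 1 = ℓ x := by
          rcases cs.length_simple_mul x i with h' | h' <;> omega
        have e2 : ℓ (σ i * (x * t)) + 1 = ℓ (x * t) := by
          rcases cs.length_simple_mul (x * t) i with h' | h' <;> omega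
        have harr2 : ℓ (σ i * x) < ℓ (σ i * x * t) := by rw [mul_assoc]; omega
        refine BruhatLE.step _ _ t ht harr2 ?_
        rw [mul_assoc]
        exact ih3 hw hv
      · obtain ⟨c1, c2⟩ := ih1 hw hv
        exact bruhat_trans cs (arrow_left' cs i x hu) (BruhatLE.step x _ t ht hlt c2)

theorem bruhat_right_lift (i : B) {u v : W} (h : BruhatLE cs u v)
    (hu : ℓ (u * σ i) < ℓ u) (hv : ℓ (v * σ i) < ℓ v) :
    BruhatLE cs (u * σ i) (v * σ i) := by
  have hinv := bruhat_inv cs h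
  have eu : σ i * u⁻¹ = (u * σ i)⁻¹ := by rw [mul_inv_rev, cs.inv_simple]
  have ev : σ i * v⁻¹ = (v * σ i)⁻¹ := by rw [mul_inv_rev, cs.inv_simple]
  have hu' : ℓ (σ i * u⁻¹) < ℓ u⁻¹ := by
    rw [eu, cs.length_inv, cs.length_inv]; exact hu
  have hv' : ℓ (σ i * v⁻¹) < ℓ v⁻¹ := by
    rw [ev, cs.length_inv, cs.length_inv]; exact hv
  have hres := (bruhat_left_lift cs i hinv).2.2 hu' hv'
  rw [eu, ev] at hres
  have hres2 := bruhat_inv cs hres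
  rwa [inv_inv, inv_inv] at hres2

end Bruhat

section Longest

theorem eq_of_all_descents {w₀ : W} (hw₀ : ∀ x : W, ℓ x ≤ ℓ w₀) {y : W}
    (hdesc : ∀ i : B, ℓ (y * σ i) < ℓ y) : y = w₀ := by
  have hu : y⁻¹ * w₀ = 1 := by
    by_contra hne
    obtain ⟨i, hi⟩ := cs.exists_leftDescent_of_ne_one hne
    have hi' : ℓ (σ i * (y⁻¹ * w₀)) < ℓ (y⁻¹ * w₀) := hi
    set u := y⁻¹ * w₀ with hudef
    have ht : cs.IsReflection (u⁻¹ * σ i * u) := by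
      have := (cs.isReflection_simple i).conj u⁻¹
      simpa using this
    have hw0u : w₀ = y * u := by rw [hudef]; group
    have hcoc : nn cs w₀ (u⁻¹ * σ i * u) =
        nn cs u (u⁻¹ * σ i * u) * nn cs y (σ i) := by
      conv_lhs => rw [hw0u]
      rw [nn_mul cs y u (u⁻¹ * σ i * u)]
      congr 1
      congr 1
      group
    have h2 : nn cs y (σ i) = -1 :=
      (nn_descent_iff cs (cs.isReflection_simple i) y).mpr (hdesc i)
    have h3 : nn cs w₀ (u⁻¹ * σ i * u) = -1 := by
      apply (nn_descent_iff cs ht w₀).mpr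
      exact lt_of_le_of_ne (hw₀ _) (ht.length_mul_left_ne w₀)
    have h4 : nn cs u (u⁻¹ * σ i * u) = 1 := by
      rcases Int.units_eq_one_or (nn cs u (u⁻¹ * σ i * u)) with h' | h'
      · exact h'
      · rw [hcoc, h', h2] at h3
        norm_num at h3
    have h5 : ℓ u < ℓ (u * (u⁻¹ * σ i * u)) := (nn_ascent_iff cs ht u).mp h4
    rw [show u * (u⁻¹ * σ i * u) = σ i * u by group] at h5
    omega
  exact inv_mul_eq_one.mp hu

theorem exists_ascent {w₀ : W} (hw₀ : ∀ x : W, ℓ x ≤ ℓ w₀) {y : W} (hy : y ≠ w₀) :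
    ∃ i, ℓ y < ℓ (y * σ i) := by
  by_contra hno
  push_neg at hno
  apply hy
  apply eq_of_all_descents cs hw₀
  intro i
  exact lt_of_le_of_ne (hno i) (cs.length_mul_simple_ne y i)

end Longest
end RPolyAux


open LaurentPolynomial

/-- For a finite Coxeter system with longest element `w₀` and `R`-polynomials defined by
`r x w₀ = δ_{x,w₀}` and the recursion, if `r x y ≠ 0` then `x ≥ y` in the Bruhat order,
and every monomial `v^k` appearing in `r x y` satisfies `k ≡ ℓ(x) - ℓ(y) (mod 2)` and
`ℓ(y) - ℓ(x) ≤ k ≤ ℓ(x) - ℓ(y)`. -/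
theorem R_polynomial_support_and_degree_bounds
    {B W : Type*} [Group W] [DecidableEq W] {M : CoxeterMatrix B} (cs : CoxeterSystem M W) [Finite W]
    (w₀ : W) (hw₀ : ∀ x : W, cs.length x ≤ cs.length w₀)
    (r : W → W → LaurentPolynomial ℤ)
    (hbase : ∀ x : W, r x w₀ = if x = w₀ then 1 else 0)
    (hrec : ∀ (x y : W) (i : B), cs.length (y * cs.simple i) < cs.length y →
      (cs.length (x * cs.simple i) < cs.length x →
        r x (y * cs.simple i) = r (x * cs.simple i) y) ∧
      (cs.length x < cs.length (x * cs.simple i) →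
        r x (y * cs.simple i) = r (x * cs.simple i) y + (T (-1) - T 1) * r x y))
    (x y : W) :
    (r x y ≠ 0 → BruhatLE cs y x) ∧
    (∀ k : ℤ, lcoeff (r x y) k ≠ 0 →
      (2 : ℤ) ∣ (k - ((cs.length x : ℤ) - (cs.length y : ℤ))) ∧
      (cs.length y : ℤ) - (cs.length x : ℤ) ≤ k ∧
      k ≤ (cs.length x : ℤ) - (cs.length y : ℤ)) := by
  have base : ∀ x : W,
      (r x w₀ ≠ 0 → BruhatLE cs w₀ x) ∧
      (∀ k : ℤ, lcoeff (r x w₀) k ≠ 0 →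
        (2 : ℤ) ∣ (k - ((cs.length x : ℤ) - (cs.length w₀ : ℤ))) ∧
        (cs.length w₀ : ℤ) - (cs.length x : ℤ) ≤ k ∧
        k ≤ (cs.length x : ℤ) - (cs.length w₀ : ℤ)) := by
    intro x
    by_cases hx : x = w₀
    · subst hx
      refine ⟨fun _ => BruhatLE.refl _, ?_⟩
      intro k hk
      rw [hbase, if_pos rfl] at hk
      have hk0 := RPolyAux.lcoeff_one k hk
      subst hk0
      refine ⟨by omega, by omega, by omega⟩
    · refine ⟨?_, ?_⟩
      · intro hne
        exfalso
        rw [hbase, if_neg hx] at hne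
        exact hne rfl
      · intro k hk
        exfalso
        rw [hbase, if_neg hx] at hk
        exact hk (by simp [lcoeff])
  have key : ∀ (n : ℕ) (y x : W), cs.length w₀ - cs.length y ≤ n →
      ((r x y ≠ 0 → BruhatLE cs y x) ∧
      (∀ k : ℤ, lcoeff (r x y) k ≠ 0 →
        (2 : ℤ) ∣ (k - ((cs.length x : ℤ) - (cs.length y : ℤ))) ∧
        (cs.length y : ℤ) - (cs.length x : ℤ) ≤ k ∧
        k ≤ (cs.length x : ℤ) - (cs.length y : ℤ))) := by
    intro n
    induction n with
    | zero =>
      intro y x hm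
      by_cases hy : y = w₀
      · subst hy; exact base x
      · exfalso
        obtain ⟨i, hi⟩ := RPolyAux.exists_ascent cs hw₀ hy
        have h1 := hw₀ (y * cs.simple i)
        omega
    | succ n ih =>
      intro y x hm
      by_cases hy : y = w₀
      · subst hy; exact base x
      · obtain ⟨i, hi⟩ := RPolyAux.exists_ascent cs hw₀ hy
        have hyy : y * cs.simple i * cs.simple i = y := cs.simple_mul_simple_cancel_right i
        have hlen' : cs.length (y * cs.simple i) = cs.length y + 1 := by
          rcases cs.length_mul_simple y i with h' | h' <;> omega
        have hup : cs.length (y * cs.simple i) ≤ cs.length w₀ := hw₀ _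
        have hm' : cs.length w₀ - cs.length (y * cs.simple i) ≤ n := by omega
        have hdec : cs.length ((y * cs.simple i) * cs.simple i) < cs.length (y * cs.simple i) := by
          rw [hyy]; omega
        have hr := hrec x (y * cs.simple i) i hdec
        rw [hyy] at hr
        rcases Nat.lt_or_gt_of_ne (cs.length_mul_simple_ne x i) with hx | hx
        · -- descent of x
          have heq : r x y = r (x * cs.simple i) (y * cs.simple i) := hr.1 hx
          have hxlen : cs.length (x * cs.simple i) + 1 = cs.length x := by
            rcases cs.length_mul_simple x i with h' | h' <;> omega
          obtain ⟨ihA, ihB⟩ := ih (y * cs.simple i) (x * cs.simple i) hm'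
          constructor
          · intro hne
            rw [heq] at hne
            have h1 := ihA hne
            -- chain y ≤ y*σi ≤ x*σi ≤ x
            have c1 : BruhatLE cs y (y * cs.simple i) :=
              RPolyAux.bruhat_arrow_right cs (cs.isReflection_simple i) hi
            have c3 : BruhatLE cs (x * cs.simple i) x := by
              have := RPolyAux.bruhat_arrow_right cs (cs.isReflection_simple i)
                (show cs.length (x * cs.simple i) <
                    cs.length ((x * cs.simple i) * cs.simple i) by
                  rw [cs.simple_mul_simple_cancel_right]; exact hx)
              rwa [cs.simple_mul_simple_cancel_right] at this
            exact RPolyAux.bruhat_trans cs c1 (RPolyAux.bruhat_trans cs h1 c3)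
          · intro k hk
            rw [heq] at hk
            obtain ⟨hd, hb1, hb2⟩ := ihB k hk
            refine ⟨by omega, by omega, by omega⟩
        · -- ascent of x
          have heq : r x y = r (x * cs.simple i) (y * cs.simple i) +
              (T (-1) - T 1) * r x (y * cs.simple i) := hr.2 hx
          have hxlen : cs.length (x * cs.simple i) = cs.length x + 1 := by
            rcases cs.length_mul_simple x i with h' | h' <;> omega
          obtain ⟨ihA1, ihB1⟩ := ih (y * cs.simple i) (x * cs.simple i) hm'
          obtain ⟨ihA2, ihB2⟩ := ih (y * cs.simple i) x hm'
          constructor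
          · intro hne
            by_cases h2 : r x (y * cs.simple i) = 0
            · have h1 : r (x * cs.simple i) (y * cs.simple i) ≠ 0 := by
                intro hz
                rw [heq, hz, h2] at hne
                simp at hne
              have h1' := ihA1 h1
              have hlift := RPolyAux.bruhat_right_lift cs i h1'
                (show cs.length ((y * cs.simple i) * cs.simple i) <
                    cs.length (y * cs.simple i) by rw [hyy]; omega)
                (show cs.length ((x * cs.simple i) * cs.simple i) <
                    cs.length (x * cs.simple i) by
                  rw [cs.simple_mul_simple_cancel_right]; omega)
              rwa [hyy, cs.simple_mul_simple_cancel_right] at hlift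
            · exact RPolyAux.bruhat_trans cs
                (RPolyAux.bruhat_arrow_right cs (cs.isReflection_simple i) hi) (ihA2 h2)
          · intro k hk
            rw [heq, RPolyAux.lcoeff_add, RPolyAux.lcoeff_shift] at hk
            have h3 : lcoeff (r (x * cs.simple i) (y * cs.simple i)) k ≠ 0 ∨
                lcoeff (r x (y * cs.simple i)) (k + 1) ≠ 0 ∨
                lcoeff (r x (y * cs.simple i)) (k - 1) ≠ 0 := by
              by_contra hcc
              push_neg at hcc
              obtain ⟨a, b, c⟩ := hcc
              rw [a, b, c] at hk
              simp at hk
            rcases h3 with h | h | h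
            · obtain ⟨hd, hb1, hb2⟩ := ihB1 k h
              refine ⟨by omega, by omega, by omega⟩
            · obtain ⟨hd, hb1, hb2⟩ := ihB2 (k + 1) h
              refine ⟨by omega, by omega, by omega⟩
            · obtain ⟨hd, hb1, hb2⟩ := ihB2 (k - 1) h
              refine ⟨by omega, by omega, by omega⟩
  exact key (cs.length w₀ - cs.length y) y x (le_refl _)
end

section
/- For a boolean element w of a Coxeter group W, the Bruhat interval [e, w] is isomorphic as a poset to the Boolean lattice of subsets of the set of simple reflections occurring in a reduced expression of w. -/
open List Real
namespace BooleanAux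
variable {B : Type*} (M : CoxeterMatrix B)

noncomputable def kk (i j : B) : ℝ := - Real.cos (Real.pi / (M i j : ℝ))

lemma kk_diag (i : B) : kk M i i = 1 := by
  simp [kk, M.diagonal i, Real.cos_pi]

lemma kk_symm (i j : B) : kk M i j = kk M j i := by
  rw [kk, kk, M.symmetric]

noncomputable def bf (i : B) : (B →₀ ℝ) →ₗ[ℝ] ℝ :=
  Finsupp.linearCombination ℝ (kk M i)

lemma bf_single (i j : B) : bf M i (Finsupp.single j 1) = kk M i j := by
  simp [bf]

noncomputable def geoRefl (i : B) : Module.End ℝ (B →₀ ℝ) :=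
  LinearMap.id - (2:ℝ) • (LinearMap.smulRight (bf M i) (Finsupp.single i 1))

lemma geoRefl_apply (i : B) (v : B →₀ ℝ) :
    geoRefl M i v = v - (2 * bf M i v) • Finsupp.single i 1 := by
  simp [geoRefl, mul_smul]

lemma geoRefl_apply_single (i j : B) :
    geoRefl M i (Finsupp.single j 1)
      = Finsupp.single j 1 - (2 * kk M i j) • Finsupp.single i 1 := by
  rw [geoRefl_apply, bf_single]

lemma geoRefl_fix {i : B} {v : B →₀ ℝ} (h : bf M i v = 0) : geoRefl M i v = v := by
  rw [geoRefl_apply, h]; simp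

lemma geo_liftable : M.IsLiftable (geoRefl M) := by
  intro i j
  rcases eq_or_ne i j with rfl | hij
  · rw [M.diagonal, pow_one]
    apply LinearMap.ext
    intro v
    have : bf M i (geoRefl M i v) = - bf M i v := by
      rw [geoRefl_apply, map_sub, map_smul, bf_single, kk_diag]
      simp; ring
    rw [Module.End.mul_apply, geoRefl_apply, this, geoRefl_apply (v := v)]
    simp [smul_smul]
  · set m : ℕ := M i j with hm
    rcases Nat.eq_zero_or_pos m with h0 | hpos
    · rw [h0, pow_zero]
    have hm1 : m ≠ 1 := by
      rw [hm]
      exact M.off_diagonal i j hij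
    have hm2 : 2 ≤ m := by omega
    obtain ⟨θ, hθ⟩ : ∃ x : ℝ, x = Real.pi / m := ⟨_, rfl⟩
    have hmR : (0:ℝ) < m := by positivity
    have hθpos : 0 < θ := by rw [hθ]; positivity
    have hθlt : θ < Real.pi := by
      rw [hθ]
      rw [div_lt_iff₀ hmR]
      have h1 : (1:ℝ) < m := by exact_mod_cast hm2
      nlinarith [Real.pi_pos]
    obtain ⟨c, hc⟩ : ∃ x : ℝ, x = Real.cos θ := ⟨_, rfl⟩
    obtain ⟨s₀, hs₀⟩ : ∃ x : ℝ, x = Real.sin θ := ⟨_, rfl⟩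
    have hs₀pos : 0 < s₀ := by rw [hs₀]; exact Real.sin_pos_of_pos_of_lt_pi hθpos hθlt
    have hs₀ne : s₀ ≠ 0 := ne_of_gt hs₀pos
    have hkij : kk M i j = -c := by rw [kk, ← hm, ← hθ, hc]
    have hkji : kk M j i = -c := by rw [← kk_symm]; exact hkij
    set T : Module.End ℝ (B →₀ ℝ) := geoRefl M i * geoRefl M j with hT
    obtain ⟨ei, hei⟩ : ∃ x : B →₀ ℝ, x = Finsupp.single i 1 := ⟨_, rfl⟩
    obtain ⟨ej, hej⟩ : ∃ x : B →₀ ℝ, x = Finsupp.single j 1 := ⟨_, rfl⟩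
    have Ti : T ei = (4*c^2-1) • ei + (2*c) • ej := by
      simp only [hT, Module.End.mul_apply, hei, hej, geoRefl_apply_single, map_sub, map_smul,
        kk_diag, hkij, hkji]
      module
    have Tj : T ej = (-(2*c)) • ei + (-1 : ℝ) • ej := by
      simp only [hT, Module.End.mul_apply, hei, hej, geoRefl_apply_single, map_sub, map_smul,
        kk_diag, hkij, hkji]
      module
    have Hsin : ∀ x : ℝ, Real.sin (x + θ) = 2*c*Real.sin x - Real.sin (x - θ) := by
      intro x
      rw [Real.sin_add, Real.sin_sub, hc]
      ring
    have key : ∀ n : ℕ,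
        (T^n) ei = (Real.sin ((2*(n:ℝ)+1)*θ)/s₀) • ei + (Real.sin ((2*(n:ℝ))*θ)/s₀) • ej
        ∧ (T^n) ej = (-(Real.sin ((2*(n:ℝ))*θ))/s₀) • ei
            + (-(Real.sin ((2*(n:ℝ)-1)*θ))/s₀) • ej := by
      intro n
      induction n with
      | zero =>
        constructor
        · rw [pow_zero, Module.End.one_apply,
            show (2*((0:ℕ):ℝ)+1)*θ = θ by push_cast; ring,
            show (2*((0:ℕ):ℝ))*θ = 0 by push_cast; ring,
            Real.sin_zero, ← hs₀, div_self hs₀ne]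
          simp
        · rw [pow_zero, Module.End.one_apply,
            show (2*((0:ℕ):ℝ))*θ = 0 by push_cast; ring,
            show (2*((0:ℕ):ℝ)-1)*θ = -θ by push_cast; ring,
            Real.sin_neg, Real.sin_zero, neg_neg, ← hs₀, div_self hs₀ne]
          simp
      | succ n ih =>
        obtain ⟨ih1, ih2⟩ := ih
        have h1 : Real.sin ((2*(n:ℝ)+2)*θ) = 2*c*Real.sin ((2*(n:ℝ)+1)*θ) - Real.sin ((2*(n:ℝ))*θ) := by
          rw [show ((2*(n:ℝ)+2)*θ) = (2*(n:ℝ)+1)*θ + θ by ring, Hsin,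
            show ((2*(n:ℝ)+1)*θ - θ) = (2*(n:ℝ))*θ by ring]
        have h0 : Real.sin ((2*(n:ℝ)+1)*θ) = 2*c*Real.sin ((2*(n:ℝ))*θ) - Real.sin ((2*(n:ℝ)-1)*θ) := by
          rw [show ((2*(n:ℝ)+1)*θ) = (2*(n:ℝ))*θ + θ by ring, Hsin,
            show ((2*(n:ℝ))*θ - θ) = (2*(n:ℝ)-1)*θ by ring]
        have h2 : Real.sin ((2*(n:ℝ)+3)*θ) = 2*c*Real.sin ((2*(n:ℝ)+2)*θ) - Real.sin ((2*(n:ℝ)+1)*θ) := by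
          rw [show ((2*(n:ℝ)+3)*θ) = (2*(n:ℝ)+2)*θ + θ by ring, Hsin,
            show ((2*(n:ℝ)+2)*θ - θ) = (2*(n:ℝ)+1)*θ by ring]
        constructor
        · rw [pow_succ, Module.End.mul_apply, Ti, map_add, map_smul, map_smul, ih1, ih2]
          push_cast
          rw [show ((2*((n:ℝ)+1)+1)*θ) = (2*(n:ℝ)+3)*θ by ring,
            show ((2*((n:ℝ)+1))*θ) = (2*(n:ℝ)+2)*θ by ring]
          rw [h2, h1, h0]
          match_scalars
          · field_simp
            ring
          · field_simp
            ring
        · rw [pow_succ, Module.End.mul_apply, Tj, map_add, map_smul, map_smul, ih1, ih2]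
          push_cast
          rw [show ((2*((n:ℝ)+1))*θ) = (2*(n:ℝ)+2)*θ by ring,
            show ((2*((n:ℝ)+1)-1)*θ) = (2*(n:ℝ)+1)*θ by ring]
          rw [h1, h0]
          match_scalars
          · field_simp
            ring
          · field_simp
            ring
    have h2pi : (2*(m:ℝ))*θ = 2*Real.pi := by
      rw [hθ]
      field_simp
    have hTmi : (T^m) ei = ei := by
      rw [(key m).1]
      rw [show ((2*(m:ℝ)+1)*θ) = (2*(m:ℝ))*θ + θ by ring, h2pi]
      rw [show (2*Real.pi + θ) = θ + 2*Real.pi by ring, Real.sin_add_two_pi, Real.sin_two_pi,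
        ← hs₀, div_self hs₀ne]
      simp
    have hTmj : (T^m) ej = ej := by
      rw [(key m).2]
      rw [show ((2*(m:ℝ)-1)*θ) = (2*(m:ℝ))*θ - θ by ring, h2pi, Real.sin_two_pi_sub,
        Real.sin_two_pi, neg_neg, ← hs₀, div_self hs₀ne]
      simp
    -- now extend to all vectors
    apply LinearMap.ext
    intro v
    rw [Module.End.one_apply]
    set bi : ℝ := bf M i v with hbi
    set bj : ℝ := bf M j v with hbj
    have hcc : 1 - c^2 ≠ 0 := by
      have : 1 - c^2 = s₀^2 := by
        have := Real.sin_sq_add_cos_sq θ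
        rw [hc, hs₀]
        nlinarith
      rw [this]
      positivity
    set α : ℝ := (bi + c*bj)/(1-c^2) with hα
    set β : ℝ := (bj + c*bi)/(1-c^2) with hβ
    set v' : B →₀ ℝ := v - α • ei - β • ej with hv'
    have hbiv' : bf M i v' = 0 := by
      rw [hv', map_sub, map_sub, map_smul, map_smul, ← hbi, hei, hej, bf_single, bf_single,
        kk_diag, hkij, hα, hβ]
      field_simp
      linear_combination (-bi) * mul_inv_cancel₀ hcc
    have hbjv' : bf M j v' = 0 := by
      rw [hv', map_sub, map_sub, map_smul, map_smul, ← hbj, hei, hej, bf_single, bf_single,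
        kk_diag, hkji, hα, hβ]
      field_simp
      linear_combination (-bj) * mul_inv_cancel₀ hcc
    have hfix : T v' = v' := by
      rw [hT, Module.End.mul_apply, geoRefl_fix M hbjv', geoRefl_fix M hbiv']
    have hfixpow : ∀ n : ℕ, (T^n) v' = v' := by
      intro n
      induction n with
      | zero => rw [pow_zero, Module.End.one_apply]
      | succ n ih => rw [pow_succ, Module.End.mul_apply, hfix, ih]
    have hv : v = v' + α • ei + β • ej := by rw [hv']; abel
    rw [hv, map_add, map_add, map_smul, map_smul, hfixpow, hTmi, hTmj]


variable {B W : Type*} [Group W] {M : CoxeterMatrix B} (cs : CoxeterSystem M W)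

noncomputable def geoRep : W →* Module.End ℝ (B →₀ ℝ) :=
  cs.lift ⟨geoRefl M, geo_liftable M⟩

lemma geoRep_simple (i : B) : geoRep cs (cs.simple i) = geoRefl M i :=
  cs.lift_apply_simple (geo_liftable M) i

theorem simple_injective : Function.Injective cs.simple := by
  intro a b hab
  by_contra hne
  have h2 : geoRefl M a (Finsupp.single a 1) = geoRefl M b (Finsupp.single a 1) := by
    rw [← geoRep_simple cs, ← geoRep_simple cs, hab]
  rw [geoRefl_apply_single, geoRefl_apply_single, kk_diag] at h2
  have h3 := congrArg (fun f : B →₀ ℝ => f a) h2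
  simp only [Finsupp.sub_apply, Finsupp.smul_apply, Finsupp.single_apply, if_pos rfl,
    if_neg (Ne.symm hne), smul_eq_mul] at h3
  rw [Finsupp.single_eq_of_ne' (Ne.symm hne)] at h3
  norm_num at h3

section PartA

variable {B W : Type*} [Group W] {M : CoxeterMatrix B} (cs : CoxeterSystem M W)

open scoped Classical

lemma rightInvSeq_cons (i : B) (ω : List B) :
    cs.rightInvSeq (i :: ω)
      = ((cs.wordProd ω)⁻¹ * cs.simple i * cs.wordProd ω) :: cs.rightInvSeq ω := rfl

lemma rightInvSeq_append (ω ω' : List B) :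
    cs.rightInvSeq (ω ++ ω') =
      (cs.rightInvSeq ω).map (fun t => (cs.wordProd ω')⁻¹ * t * cs.wordProd ω')
        ++ cs.rightInvSeq ω' := by
  induction ω with
  | nil => simp
  | cons i ω ih =>
      rw [List.cons_append, rightInvSeq_cons, rightInvSeq_cons, ih, List.map_cons,
        List.cons_append, cs.wordProd_append]
      congr 1
      group

lemma leftInvSeq_eq_map_conj (ω : List B) :
    cs.leftInvSeq ω
      = (cs.rightInvSeq ω).map (fun x => cs.wordProd ω * x * (cs.wordProd ω)⁻¹) := by
  induction ω with
  | nil => simp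
  | cons i ω ih =>
      show cs.simple i :: (cs.leftInvSeq ω).map (MulAut.conj (cs.simple i)) = _
      rw [ih, rightInvSeq_cons, List.map_cons, List.map_map]
      congr 1
      · rw [cs.wordProd_cons]
        group
      · apply List.map_congr_left
        intro x _
        simp only [Function.comp_apply, MulAut.conj_apply, cs.wordProd_cons]
        group

/-- sign of occurrences of `u` in a list -/
noncomputable def sgn (u : W) (L : List W) : ℤˣ :=
  (L.map (fun x => if x = u then (-1 : ℤˣ) else 1)).prod

lemma sgn_nil (u : W) : sgn u ([] : List W) = 1 := rfl

lemma sgn_cons (u a : W) (L : List W) :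
    sgn u (a :: L) = (if a = u then (-1 : ℤˣ) else 1) * sgn u L := by
  rw [sgn, sgn, List.map_cons, List.prod_cons]

lemma sgn_append (u : W) (L L' : List W) :
    sgn u (L ++ L') = sgn u L * sgn u L' := by
  rw [sgn, sgn, sgn, List.map_append, List.prod_append]

lemma sgn_reverse (u : W) (L : List W) : sgn u (L.reverse) = sgn u L := by
  rw [sgn, sgn, List.map_reverse, List.prod_reverse]

lemma sgn_eq_one_of_not_mem {u : W} {L : List W} (h : u ∉ L) : sgn u L = 1 := by
  induction L with
  | nil => rfl
  | cons a L ih =>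
      rw [sgn_cons, if_neg (fun hh => h (by rw [← hh]; exact List.mem_cons_self)),
        ih (fun hh => h (List.mem_cons_of_mem a hh)), one_mul]

lemma neg_one_ne_one' : (-1 : ℤˣ) ≠ 1 := by decide

lemma mem_of_sgn_eq_neg_one {u : W} {L : List W} (h : sgn u L = -1) : u ∈ L := by
  by_contra hn
  rw [sgn_eq_one_of_not_mem hn] at h
  exact neg_one_ne_one' h.symm

lemma sgn_eq_neg_one_of_mem_of_nodup {u : W} {L : List W} (hm : u ∈ L) (hnd : L.Nodup) :
    sgn u L = -1 := by
  induction L with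
  | nil => exact absurd hm (List.not_mem_nil)
  | cons a L ih =>
      obtain ⟨hnm, hnd'⟩ := List.nodup_cons.mp hnd
      rcases List.mem_cons.mp hm with rfl | hm'
      · rw [sgn_cons, if_pos rfl, sgn_eq_one_of_not_mem hnm, mul_one]
      · rw [sgn_cons, if_neg, ih hm' hnd', mul_neg_one]
        rintro rfl
        exact hnm hm'

lemma sgn_map_conj (u v : W) (L : List W) :
    sgn u (L.map (fun x => v * x * v⁻¹)) = sgn (v⁻¹ * u * v) L := by
  rw [sgn, sgn, List.map_map]
  congr 1
  apply List.map_congr_left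
  intro x _
  by_cases h : x = v⁻¹ * u * v
  · rw [Function.comp_apply, if_pos (by rw [h]; group), if_pos h]
  · rw [Function.comp_apply, if_neg (fun hh => h (by rw [← hh]; group)), if_neg h]

/-- the sign permutation at a simple reflection -/
noncomputable def sp (i : B) : Equiv.Perm (W × ℤˣ) :=
  Function.Involutive.toPerm
    (fun p => (cs.simple i * p.1 * cs.simple i,
      if p.1 = cs.simple i then -p.2 else p.2))
    (by
      rintro ⟨u, e⟩
      by_cases h : u = cs.simple i
      · subst h
        simp [cs.simple_mul_simple_self]
      · have h2 : cs.simple i * u * cs.simple i ≠ cs.simple i := by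
          intro hh
          apply h
          have h3 := congrArg (fun z => cs.simple i * z * cs.simple i) hh
          simpa [mul_assoc, cs.simple_mul_simple_cancel_left,
            cs.simple_mul_simple_self] using h3
        simp only [h, h2, if_neg, if_false]
        refine Prod.ext ?_ rfl
        simp [mul_assoc, cs.simple_mul_simple_cancel_left, cs.simple_mul_simple_self])

lemma sp_apply (i : B) (p : W × ℤˣ) :
    sp cs i p = (cs.simple i * p.1 * cs.simple i,
      if p.1 = cs.simple i then -p.2 else p.2) := rfl

lemma spProd_apply (ω : List B) (p : W × ℤˣ) :
    ((ω.map (sp cs)).prod) p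
      = (cs.wordProd ω * p.1 * (cs.wordProd ω)⁻¹,
          sgn p.1 (cs.rightInvSeq ω) * p.2) := by
  induction ω generalizing p with
  | nil => simp [sgn_nil]
  | cons i ω ih =>
      rw [List.map_cons, List.prod_cons, Equiv.Perm.mul_apply, ih, sp_apply]
      rw [rightInvSeq_cons, sgn_cons]
      have hcond : (cs.wordProd ω * p.1 * (cs.wordProd ω)⁻¹ = cs.simple i)
          ↔ ((cs.wordProd ω)⁻¹ * cs.simple i * cs.wordProd ω = p.1) := by
        constructor
        · intro h; rw [← h]; group
        · intro h; rw [← h]; group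
      refine Prod.ext ?_ ?_
      · rw [cs.wordProd_cons]
        dsimp only
        rw [mul_inv_rev, cs.inv_simple]
        group
      · dsimp only
        by_cases h : cs.wordProd ω * p.1 * (cs.wordProd ω)⁻¹ = cs.simple i
        · rw [if_pos h, if_pos (hcond.mp h), mul_assoc, neg_one_mul]
        · rw [if_neg h, if_neg (fun hh => h (hcond.mpr hh)), one_mul]

/-- double letter word -/
def pairRep (i j : B) : ℕ → List B
  | 0 => []
  | (n+1) => i :: j :: pairRep i j n

lemma pairRep_map_prod {G : Type*} [Monoid G] (f : B → G) (i j : B) (n : ℕ) :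
    ((pairRep i j n).map f).prod = (f i * f j)^n := by
  induction n with
  | zero => simp [pairRep]
  | succ n ih =>
      rw [pairRep, List.map_cons, List.map_cons, List.prod_cons, List.prod_cons, ih,
        pow_succ']
      rw [mul_assoc]

lemma pairRep_wordProd (i j : B) (n : ℕ) :
    cs.wordProd (pairRep i j n) = (cs.simple i * cs.simple j)^n :=
  pairRep_map_prod cs.simple i j n

lemma inv_pow_simple_mul_pow (i j : B) (a : ℕ) :
    ((cs.simple i * cs.simple j)^a)⁻¹ * cs.simple j * (cs.simple i * cs.simple j)^a
      = cs.simple j * (cs.simple i * cs.simple j)^(2*a) := by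
  have key : (cs.simple i * cs.simple j)⁻¹ * cs.simple j
      = cs.simple j * (cs.simple i * cs.simple j) := by
    rw [mul_inv_rev, cs.inv_simple, cs.inv_simple]
    group
  induction a with
  | zero => simp
  | succ a ih =>
      have key2 : (cs.simple i * cs.simple j)⁻¹ * cs.simple j * (cs.simple i * cs.simple j)
          = cs.simple j * ((cs.simple i * cs.simple j) * (cs.simple i * cs.simple j)) := by
        rw [key, mul_assoc]
      calc ((cs.simple i * cs.simple j)^(a+1))⁻¹ * cs.simple j * (cs.simple i * cs.simple j)^(a+1)
          = ((cs.simple i * cs.simple j)^a)⁻¹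
            * ((cs.simple i * cs.simple j)⁻¹ * cs.simple j * (cs.simple i * cs.simple j))
            * (cs.simple i * cs.simple j)^a := by
            rw [pow_succ', mul_inv_rev]
            simp only [mul_assoc]
        _ = ((cs.simple i * cs.simple j)^a)⁻¹
            * (cs.simple j * ((cs.simple i * cs.simple j) * (cs.simple i * cs.simple j)))
            * (cs.simple i * cs.simple j)^a := by rw [key2]
        _ = ((cs.simple i * cs.simple j)^a)⁻¹ * cs.simple j
            * ((cs.simple i * cs.simple j)^2 * (cs.simple i * cs.simple j)^a) := by
            rw [pow_two]
            simp only [mul_assoc]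
        _ = ((cs.simple i * cs.simple j)^a)⁻¹ * cs.simple j
            * ((cs.simple i * cs.simple j)^a * (cs.simple i * cs.simple j)^2) := by
            rw [← pow_add, ← pow_add, Nat.add_comm]
        _ = (((cs.simple i * cs.simple j)^a)⁻¹ * cs.simple j
            * (cs.simple i * cs.simple j)^a) * (cs.simple i * cs.simple j)^2 := by
            simp only [mul_assoc]
        _ = cs.simple j * (cs.simple i * cs.simple j)^(2*a)
            * (cs.simple i * cs.simple j)^2 := by rw [ih]
        _ = cs.simple j * (cs.simple i * cs.simple j)^(2*(a+1)) := by
            rw [mul_assoc, ← pow_add, show 2*a+2 = 2*(a+1) from by omega]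

lemma rightInvSeq_pairRep (i j : B) (n : ℕ) :
    cs.rightInvSeq (pairRep i j n)
      = ((List.range (2*n)).reverse).map
          (fun k => cs.simple j * (cs.simple i * cs.simple j)^k) := by
  induction n with
  | zero => simp [pairRep]
  | succ n ih =>
      have hrw : pairRep i j (n+1) = [i, j] ++ pairRep i j n := rfl
      have hris : cs.rightInvSeq [i, j]
          = [cs.simple j * cs.simple i * cs.simple j, cs.simple j] := by
        rw [rightInvSeq_cons, cs.rightInvSeq_singleton, cs.wordProd_singleton, cs.inv_simple]
      have hrange : (List.range (2*(n+1))).reverse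
          = (2*n+1) :: (2*n) :: (List.range (2*n)).reverse := by
        rw [show 2*(n+1) = (2*n+1)+1 by omega, List.range_succ, List.range_succ]
        simp
      have hcomm : (cs.simple i * cs.simple j) * (cs.simple i * cs.simple j)^n
          = (cs.simple i * cs.simple j)^n * (cs.simple i * cs.simple j) := by
        rw [← pow_succ', ← pow_succ]
      have hhead1 : ((cs.simple i * cs.simple j)^n)⁻¹
            * (cs.simple j * cs.simple i * cs.simple j) * (cs.simple i * cs.simple j)^n
          = cs.simple j * (cs.simple i * cs.simple j)^(2*n+1) := by
        calc ((cs.simple i * cs.simple j)^n)⁻¹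
              * (cs.simple j * cs.simple i * cs.simple j) * (cs.simple i * cs.simple j)^n
            = ((cs.simple i * cs.simple j)^n)⁻¹ * cs.simple j
              * ((cs.simple i * cs.simple j) * (cs.simple i * cs.simple j)^n) := by
              simp only [mul_assoc]
          _ = (((cs.simple i * cs.simple j)^n)⁻¹ * cs.simple j
              * (cs.simple i * cs.simple j)^n) * (cs.simple i * cs.simple j) := by
              rw [hcomm]
              simp only [mul_assoc]
          _ = cs.simple j * (cs.simple i * cs.simple j)^(2*n)
              * (cs.simple i * cs.simple j) := by rw [inv_pow_simple_mul_pow]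
          _ = cs.simple j * (cs.simple i * cs.simple j)^(2*n+1) := by
              rw [mul_assoc, ← pow_succ]
      rw [hrw, rightInvSeq_append, ih, hris]
      simp only [List.map_cons, List.map_nil, List.cons_append, List.nil_append]
      rw [pairRep_wordProd, hrange, List.map_cons, List.map_cons]
      rw [hhead1, inv_pow_simple_mul_pow]

lemma sgn_rightInvSeq_pairRep (i j : B) (u : W) :
    sgn u (cs.rightInvSeq (pairRep i j (M i j))) = 1 := by
  rw [rightInvSeq_pairRep, List.map_reverse, sgn_reverse]
  set m := M i j with hm
  have hp : (cs.simple i * cs.simple j)^m = 1 := cs.simple_mul_simple_pow i j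
  rw [show 2*m = m + m by omega, List.range_add, List.map_append, sgn_append]
  have : (List.map (fun k => cs.simple j * (cs.simple i * cs.simple j)^k)
      ((List.range m).map (fun k => m + k)))
      = List.map (fun k => cs.simple j * (cs.simple i * cs.simple j)^k)
        (List.range m) := by
    rw [List.map_map]
    apply List.map_congr_left
    intro k _
    simp only [Function.comp_apply]
    rw [show m + k = k + m by omega, pow_add, hp, mul_one]
  rw [this]
  exact Int.units_mul_self _

lemma sp_liftable : M.IsLiftable (sp cs) := by
  intro i j
  have h1 : (sp cs i * sp cs j)^(M i j) = ((pairRep i j (M i j)).map (sp cs)).prod :=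
    (pairRep_map_prod (sp cs) i j (M i j)).symm
  rw [h1]
  apply Equiv.ext
  intro p
  rw [spProd_apply, pairRep_wordProd, cs.simple_mul_simple_pow,
    sgn_rightInvSeq_pairRep, one_mul]
  simp

/-- The sign representation `W →* Perm (W × ℤˣ)`. -/
noncomputable def Phi : W →* Equiv.Perm (W × ℤˣ) := cs.lift ⟨sp cs, sp_liftable cs⟩

lemma Phi_simple (i : B) : Phi cs (cs.simple i) = sp cs i :=
  cs.lift_apply_simple (sp_liftable cs) i

lemma Phi_wordProd (ω : List B) : Phi cs (cs.wordProd ω) = ((ω.map (sp cs)).prod) := by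
  rw [CoxeterSystem.wordProd, map_list_prod, List.map_map]
  congr 1
  apply List.map_congr_left
  intro x _
  exact Phi_simple cs x

/-- the sign of `u` relative to `w` -/
noncomputable def eta (w u : W) : ℤˣ := ((Phi cs w) (u, 1)).2

lemma eta_eq_sgn {w : W} {ω : List B} (hω : cs.wordProd ω = w) (u : W) :
    eta cs w u = sgn u (cs.rightInvSeq ω) := by
  rw [eta, ← hω, Phi_wordProd, spProd_apply, mul_one]

lemma Phi_apply (w : W) (p : W × ℤˣ) :
    (Phi cs w) p = (w * p.1 * w⁻¹, eta cs w p.1 * p.2) := by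
  obtain ⟨ω, rfl⟩ := cs.wordProd_surjective w
  rw [Phi_wordProd, spProd_apply, eta_eq_sgn cs rfl]

lemma sgn_map_conj' (u v : W) (L : List W) :
    sgn u (L.map (fun x => v⁻¹ * x * v)) = sgn (v * u * v⁻¹) L := by
  have := sgn_map_conj u v⁻¹ L
  rw [inv_inv] at this
  exact this

lemma eta_refl_self {t : W} (ht : cs.IsReflection t) : eta cs t t = -1 := by
  obtain ⟨v, i, rfl⟩ := ht
  obtain ⟨ρ, rfl⟩ := cs.wordProd_surjective v
  have hword : cs.wordProd (ρ ++ i :: ρ.reverse)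
      = cs.wordProd ρ * cs.simple i * (cs.wordProd ρ)⁻¹ := by
    rw [cs.wordProd_append, cs.wordProd_cons, cs.wordProd_reverse, mul_assoc]
  rw [eta_eq_sgn cs hword, rightInvSeq_append, sgn_append, rightInvSeq_cons, sgn_cons,
    cs.wordProd_reverse, inv_inv]
  rw [if_pos rfl]
  have hπ : cs.wordProd (i :: ρ.reverse) = cs.simple i * (cs.wordProd ρ)⁻¹ := by
    rw [cs.wordProd_cons, cs.wordProd_reverse]
  rw [hπ]
  have hclaim1 : sgn (cs.wordProd ρ * cs.simple i * (cs.wordProd ρ)⁻¹)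
      ((cs.rightInvSeq ρ).map
        (fun x => (cs.simple i * (cs.wordProd ρ)⁻¹)⁻¹ * x * (cs.simple i * (cs.wordProd ρ)⁻¹)))
      = sgn (cs.simple i) (cs.rightInvSeq ρ) := by
    rw [sgn_map_conj']
    congr 1
    rw [mul_inv_rev, inv_inv, cs.inv_simple]
    simp only [mul_assoc]
    rw [inv_mul_cancel_left, inv_mul_cancel_left]
    rw [← mul_assoc, cs.simple_mul_simple_self, one_mul]
  have hclaim2 : sgn (cs.wordProd ρ * cs.simple i * (cs.wordProd ρ)⁻¹)
      (cs.rightInvSeq ρ.reverse) = sgn (cs.simple i) (cs.rightInvSeq ρ) := by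
    rw [cs.rightInvSeq_reverse, sgn_reverse, leftInvSeq_eq_map_conj, sgn_map_conj]
    congr 1
    group
  rw [hclaim1, hclaim2]
  rw [show ∀ X : ℤˣ, X * (-1 * X) = -(X * X) from fun X => by rw [neg_one_mul, mul_neg]]
  rw [Int.units_mul_self]

lemma eta_mul_refl {w t : W} (ht : cs.IsReflection t) :
    eta cs (w * t) t = - eta cs w t := by
  have h1 : Phi cs t (t, 1) = (t, -1) := by
    rw [Phi_apply, eta_refl_self cs ht, mul_one]
    congr 1
    rw [ht.mul_self, one_mul, ht.inv]
  rw [eta, map_mul, Equiv.Perm.mul_apply, h1, Phi_apply]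
  rw [eta]
  dsimp only
  rw [mul_neg_one]

lemma isRightInversion_iff_eta {w t : W} (ht : cs.IsReflection t) :
    cs.IsRightInversion w t ↔ eta cs w t = -1 := by
  have aux : ∀ w' : W, eta cs w' t = -1 → cs.IsRightInversion w' t := by
    intro w' h
    obtain ⟨ω, hredω, hw'⟩ := cs.exists_reduced_word' w'
    have h3 : sgn t (cs.rightInvSeq ω) = -1 := by
      rw [← eta_eq_sgn cs hw'.symm]; exact h
    have := cs.isRightInversion_of_mem_rightInvSeq hredω (mem_of_sgn_eq_neg_one h3)
    rwa [← hw'] at this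
  constructor
  · intro h
    rcases Int.units_eq_one_or (eta cs w t) with h1 | h1
    · exfalso
      have h2 : eta cs (w * t) t = -1 := by rw [eta_mul_refl cs ht, h1]
      have h5 := (aux _ h2).2
      rw [mul_assoc, ht.mul_self, mul_one] at h5
      exact absurd h.2 (by omega)
    · exact h1
  · exact aux w

lemma strongExchange_mem {t : W} (ht : cs.IsReflection t) (ω : List B)
    (hlt : cs.length (cs.wordProd ω * t) < cs.length (cs.wordProd ω)) :
    t ∈ cs.rightInvSeq ω := by
  have h : eta cs (cs.wordProd ω) t = -1 := (isRightInversion_iff_eta cs ht).mp ⟨ht, hlt⟩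
  rw [eta_eq_sgn cs rfl] at h
  exact mem_of_sgn_eq_neg_one h

lemma strongExchange {t : W} (ht : cs.IsReflection t) (ω : List B)
    (hlt : cs.length (cs.wordProd ω * t) < cs.length (cs.wordProd ω)) :
    ∃ j, ∃ hj : j < ω.length, cs.wordProd ω * t = cs.wordProd (ω.eraseIdx j)
      ∧ (cs.rightInvSeq ω).getD j 1 = t := by
  obtain ⟨j, hj, hjt⟩ := List.mem_iff_getElem.mp (strongExchange_mem cs ht ω hlt)
  have hj' : j < ω.length := by simpa using hj
  have hgd : (cs.rightInvSeq ω).getD j 1 = t := by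
    rw [List.getD_eq_getElem _ _ hj, hjt]
  exact ⟨j, hj', by rw [← hgd]; exact cs.wordProd_mul_getD_rightInvSeq ω j, hgd⟩

lemma exists_reduced_sublist' :
    ∀ n (ω : List B), ω.length ≤ n →
      ∃ ρ, ρ.Sublist ω ∧ cs.IsReduced ρ ∧ cs.wordProd ρ = cs.wordProd ω := by
  intro n
  induction n with
  | zero =>
      intro ω hω
      have : ω = [] := List.length_eq_zero_iff.mp (Nat.le_zero.mp hω)
      subst this
      exact ⟨[], List.Sublist.refl _, by simp [CoxeterSystem.IsReduced], rfl⟩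
  | succ n ih =>
      intro ω hω
      by_cases hred : cs.IsReduced ω
      · exact ⟨ω, List.Sublist.refl ω, hred, rfl⟩
      rcases List.eq_nil_or_concat ω with rfl | ⟨ω', b, rfl⟩
      · exact absurd (by simp [CoxeterSystem.IsReduced]) hred
      rw [List.concat_eq_append] at hω hred ⊢
      have hωlen : ω'.length + 1 ≤ n + 1 := by simpa using hω
      by_cases hred' : cs.IsReduced ω'
      · have hd : cs.length (cs.wordProd ω' * cs.simple b) < cs.length (cs.wordProd ω') := by
          rcases cs.length_mul_simple (cs.wordProd ω') b with h | h
          · exfalso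
            apply hred
            show cs.length (cs.wordProd (ω' ++ [b])) = (ω' ++ [b]).length
            rw [cs.wordProd_append, cs.wordProd_singleton, h, hred']
            simp
          · omega
        obtain ⟨j, hj, hje, _⟩ := strongExchange cs (cs.isReflection_simple b) ω' hd
        obtain ⟨ρ, hsub, hr, hp⟩ := ih (ω'.eraseIdx j) (by
          have := List.length_eraseIdx_add_one hj
          omega)
        refine ⟨ρ, ?_, hr, ?_⟩
        · exact hsub.trans ((List.eraseIdx_sublist ω' j).trans (List.sublist_append_left ω' [b]))
        · rw [hp, ← hje, cs.wordProd_append, cs.wordProd_singleton]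
      · obtain ⟨ρ', hsub, hr, hp⟩ := ih ω' (by omega)
        have hne : ρ' ≠ ω' := by
          rintro rfl
          exact hred' hr
        have hlt : ρ'.length < ω'.length :=
          lt_of_le_of_ne hsub.length_le (fun hh => hne (hsub.eq_of_length hh))
        obtain ⟨ρ, hsub2, hr2, hp2⟩ := ih (ρ' ++ [b]) (by simp; omega)
        refine ⟨ρ, hsub2.trans (hsub.append_right [b]), hr2, ?_⟩
        rw [hp2, cs.wordProd_append, cs.wordProd_append, hp]

lemma exists_reduced_sublist (ω : List B) :
    ∃ ρ, ρ.Sublist ω ∧ cs.IsReduced ρ ∧ cs.wordProd ρ = cs.wordProd ω :=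
  exists_reduced_sublist' cs ω.length ω le_rfl

/-- if a word represents a simple reflection, its letter occurs in the word -/
lemma mem_of_wordProd_eq_simple {v : List B} {a : B}
    (h : cs.wordProd v = cs.simple a) : a ∈ v := by
  obtain ⟨ρ, hsub, hr, hp⟩ := exists_reduced_sublist cs v
  rw [h] at hp
  have hlen : ρ.length = 1 := by
    have := hr
    rw [CoxeterSystem.IsReduced, hp, cs.length_simple] at this
    omega
  obtain ⟨b, rfl⟩ := List.length_eq_one_iff.mp hlen
  rw [cs.wordProd_singleton] at hp
  have : b = a := simple_injective cs hp
  subst this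
  exact hsub.subset (List.mem_singleton_self b)

/-- letters of right inversion sequence entries: if an entry is a simple reflection,
its index occurs in the word -/
lemma mem_of_getD_rightInvSeq_eq_simple {ω : List B} {j : ℕ} (hj : j < ω.length) {y : B}
    (h : (cs.rightInvSeq ω).getD j 1 = cs.simple y) :
    y = ω[j] ∨ y ∈ ω.drop (j+1) := by
  rw [cs.getD_rightInvSeq] at h
  have hget : ω[j]? = some ω[j] := by
    rw [List.getElem?_eq_getElem hj]
  rw [hget] at h
  have hword : cs.wordProd ((ω.drop (j+1)).reverse ++ ω[j] :: ω.drop (j+1))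
      = cs.simple y := by
    rw [cs.wordProd_append, cs.wordProd_cons, cs.wordProd_reverse, ← mul_assoc]
    simpa using h
  have hmem := mem_of_wordProd_eq_simple cs hword
  rcases List.mem_append.mp hmem with h1 | h1
  · exact Or.inr (List.mem_reverse.mp h1)
  · rcases List.mem_cons.mp h1 with h2 | h2
    · exact Or.inl h2
    · exact Or.inr h2

end PartA

section PartC

variable {B W : Type*} [Group W] [DecidableEq B] {M : CoxeterMatrix B} (cs : CoxeterSystem M W)

lemma bruhat_trans {x y z : W} (h1 : BruhatLE cs x y) :
    BruhatLE cs y z → BruhatLE cs x z := by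
  induction h1 with
  | refl x => exact id
  | step a b t ht hlt h ih => exact fun h2 => BruhatLE.step a z t ht hlt (ih h2)

lemma subword_of_le {z w : W} (h : BruhatLE cs z w) :
    ∀ ω : List B, cs.wordProd ω = w → ∃ u, u.Sublist ω ∧ cs.wordProd u = z := by
  induction h with
  | refl x => exact fun ω hω => ⟨ω, List.Sublist.refl ω, hω⟩
  | step x y t ht hlt h ih =>
      intro ω hω
      obtain ⟨u, hsub, hu⟩ := ih ω hω
      have hlt2 : cs.length (cs.wordProd u * t) < cs.length (cs.wordProd u) := by
        rw [hu, mul_assoc, ht.mul_self, mul_one]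
        exact hlt
      obtain ⟨j, hj, hje, _⟩ := strongExchange cs ht u hlt2
      refine ⟨u.eraseIdx j, (List.eraseIdx_sublist u j).trans hsub, ?_⟩
      rw [← hje, hu, mul_assoc, ht.mul_self, mul_one]

lemma filter_mem_eq_self_of_sublist {u l : List B} (h : u.Sublist l) (hnd : l.Nodup) :
    l.filter (fun a => a ∈ u) = u := by
  induction h with
  | slnil => rfl
  | @cons u l b h ih =>
      obtain ⟨hbl, hnd'⟩ := List.nodup_cons.mp hnd
      have hb : b ∉ u := fun hbu => hbl (h.subset hbu)
      rw [List.filter_cons_of_neg (by simpa using hb), ih hnd']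
  | @cons_cons u l b h ih =>
      obtain ⟨hbl, hnd'⟩ := List.nodup_cons.mp hnd
      rw [List.filter_cons_of_pos (by simp)]
      have heq : l.filter (fun a => a ∈ b :: u) = l.filter (fun a => a ∈ u) := by
        apply List.filter_congr
        intro x hx
        have hxb : x ≠ b := fun hh => hbl (hh ▸ hx)
        simp [List.mem_cons, hxb]
      rw [heq, ih hnd']

lemma isReduced_sublist {l : List B} (hl : cs.IsReduced l) (hnd : l.Nodup) :
    ∀ u, u.Sublist l → cs.IsReduced u := by
  intro u
  induction u using List.reverseRecOn with
  | nil => intro _; simp [CoxeterSystem.IsReduced]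
  | append_singleton u y ih =>
      intro hsub
      have hu : u.Sublist l := (List.sublist_append_left u [y]).trans hsub
      have hred := ih hu
      have hndu : (u ++ [y]).Nodup := hsub.nodup hnd
      have hynu : y ∉ u := by
        rw [List.nodup_append] at hndu
        intro hy
        exact hndu.2.2 y hy y (List.mem_singleton_self y) rfl
      by_contra hnr
      have hd : cs.length (cs.wordProd u * cs.simple y) < cs.length (cs.wordProd u) := by
        rcases cs.length_mul_simple (cs.wordProd u) y with h | h
        · exfalso
          apply hnr
          show cs.length (cs.wordProd (u ++ [y])) = (u ++ [y]).length
          rw [cs.wordProd_append, cs.wordProd_singleton, h, hred]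
          simp
        · omega
      obtain ⟨j, hj, _, hgd⟩ := strongExchange cs (cs.isReflection_simple y) u hd
      rcases mem_of_getD_rightInvSeq_eq_simple cs hj hgd with h1 | h1
      · exact hynu (h1 ▸ u.getElem_mem hj)
      · exact hynu (List.mem_of_mem_drop h1)

lemma sublist_wordProd_injective' {l : List B} (hl : cs.IsReduced l) (hnd : l.Nodup) :
    ∀ n u u', u.length ≤ n → u.Sublist l → u'.Sublist l →
      cs.wordProd u = cs.wordProd u' → u = u' := by
  intro n
  induction n with
  | zero =>
      intro u u' hlen hsu hsu' heq
      have hu0 : u = [] := List.length_eq_zero_iff.mp (Nat.le_zero.mp hlen)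
      subst hu0
      have : cs.length (cs.wordProd u') = 0 := by
        rw [← heq, cs.wordProd_nil, cs.length_one]
      rw [isReduced_sublist cs hl hnd u' hsu'] at this
      exact (List.length_eq_zero_iff.mp this).symm
  | succ n ih =>
      intro u u' hlen hsu hsu' heq
      rcases List.eq_nil_or_concat u with rfl | ⟨u₀, y, rfl⟩
      · have : cs.length (cs.wordProd u') = 0 := by
          rw [← heq, cs.wordProd_nil, cs.length_one]
        rw [isReduced_sublist cs hl hnd u' hsu'] at this
        exact (List.length_eq_zero_iff.mp this).symm
      rw [List.concat_eq_append] at hlen hsu heq ⊢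
      have hu₀ : u₀.Sublist l := (List.sublist_append_left u₀ [y]).trans hsu
      have hndu : (u₀ ++ [y]).Nodup := hsu.nodup hnd
      have hynu : y ∉ u₀ := by
        rw [List.nodup_append] at hndu
        intro hy
        exact hndu.2.2 y hy y (List.mem_singleton_self y) rfl
      -- s_y is a right descent of π u'
      have hred₀ : cs.IsReduced u₀ := isReduced_sublist cs hl hnd u₀ hu₀
      have hredu : cs.IsReduced (u₀ ++ [y]) := isReduced_sublist cs hl hnd _ hsu
      have hredu' : cs.IsReduced u' := isReduced_sublist cs hl hnd u' hsu'
      have hprod : cs.wordProd u' * cs.simple y = cs.wordProd u₀ := by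
        rw [← heq, cs.wordProd_append, cs.wordProd_singleton, mul_assoc,
          cs.simple_mul_simple_self, mul_one]
      have hlenu' : u'.length = u₀.length + 1 := by
        have e1 := hredu
        have e2 := hredu'
        rw [CoxeterSystem.IsReduced] at e1 e2
        rw [heq, e2] at e1
        simpa using e1
      have hd : cs.length (cs.wordProd u' * cs.simple y) < cs.length (cs.wordProd u') := by
        rw [hprod, hred₀, hredu']
        omega
      obtain ⟨j, hj, hje, hgd⟩ := strongExchange cs (cs.isReflection_simple y) u' hd
      have heq₀ : cs.wordProd u₀ = cs.wordProd (u'.eraseIdx j) := by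
        rw [← hprod, hje]
      have hsubj : (u'.eraseIdx j).Sublist l := (List.eraseIdx_sublist u' j).trans hsu'
      have hlen₀ : u₀.length ≤ n := by
        have := hlen
        simp at this
        omega
      have hmain := ih u₀ (u'.eraseIdx j) hlen₀ hu₀ hsubj heq₀
      -- identify the letter: y = u'[j]
      have hyj : y = u'[j] := by
        rcases mem_of_getD_rightInvSeq_eq_simple cs hj hgd with h1 | h1
        · exact h1
        · exfalso
          apply hynu
          rw [hmain, List.eraseIdx_eq_take_drop_succ]
          exact List.mem_append_right _ h1
      -- conclude equality of letter sets, then of lists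
      have hmemiff : ∀ a, a ∈ u₀ ++ [y] ↔ a ∈ u' := by
        intro a
        have hu' : u'.take j ++ u'[j] :: u'.drop (j+1) = u' := by
          rw [List.getElem_cons_drop]
          exact List.take_append_drop j u'
        rw [← hu', hmain, List.eraseIdx_eq_take_drop_succ, ← hyj]
        simp [List.mem_append, List.mem_cons]
        tauto
      have h1 : l.filter (fun a => a ∈ u₀ ++ [y]) = u₀ ++ [y] :=
        filter_mem_eq_self_of_sublist hsu hnd
      have h2 : l.filter (fun a => a ∈ u') = u' :=
        filter_mem_eq_self_of_sublist hsu' hnd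
      rw [← h1, ← h2]
      apply List.filter_congr
      intro x _
      simp [hmemiff x]

lemma bruhat_of_sublist {l : List B} (hl : cs.IsReduced l) (hnd : l.Nodup) :
    ∀ (q u v : List B), u.Sublist v → (q ++ v).Sublist l →
      BruhatLE cs (cs.wordProd (q ++ u)) (cs.wordProd (q ++ v)) := by
  intro q u v h
  induction h generalizing q with
  | slnil => exact fun _ => BruhatLE.refl _
  | @cons u v b h ih =>
      intro hsub
      have hqv : (q ++ v).Sublist l :=
        (List.Sublist.append_left (List.sublist_cons_self b v) q).trans hsub
      refine bruhat_trans cs (ih q hqv) ?_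
      have hr : cs.IsReflection ((cs.wordProd v)⁻¹ * cs.simple b * cs.wordProd v) := by
        have := (cs.isReflection_simple b).conj ((cs.wordProd v)⁻¹)
        rwa [inv_inv] at this
      have heq : cs.wordProd (q ++ v) * ((cs.wordProd v)⁻¹ * cs.simple b * cs.wordProd v)
          = cs.wordProd (q ++ b :: v) := by
        rw [cs.wordProd_append, cs.wordProd_append, cs.wordProd_cons]
        simp only [mul_assoc]
        rw [mul_inv_cancel_left]
      have hlt : cs.length (cs.wordProd (q ++ v))
          < cs.length (cs.wordProd (q ++ v)
              * ((cs.wordProd v)⁻¹ * cs.simple b * cs.wordProd v)) := by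
        rw [heq, isReduced_sublist cs hl hnd _ hqv, isReduced_sublist cs hl hnd _ hsub]
        simp
      exact BruhatLE.step _ _ _ hr hlt (heq ▸ BruhatLE.refl _)
  | @cons_cons u v b h ih =>
      intro hsub
      have hsub' : ((q ++ [b]) ++ v).Sublist l := by
        rw [List.append_assoc]
        simpa using hsub
      have := ih (q ++ [b]) hsub'
      simpa [List.append_assoc] using this

end PartC

end BooleanAux

open BooleanAux in
/-- For a boolean element `w` of a Coxeter group (one with a reduced word `l` in which
every simple reflection occurs at most once), the Bruhat interval `[e, w] = {z : z ≤ w}`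
is isomorphic as a poset to the Boolean lattice of subsets of the set of simple
reflections occurring in `w`, ordered by inclusion. -/
theorem boolean_interval_is_boolean_lattice
    {B W : Type*} [Group W] [DecidableEq B] {M : CoxeterMatrix B}
    (cs : CoxeterSystem M W)
    (w : W) (l : List B) (hnd : l.Nodup) (hw : cs.wordProd l = w)
    (hred : cs.length w = l.length) :
    ∃ e : {z : W // BruhatLE cs z w} ≃ {t : Finset B // t ⊆ l.toFinset},
      ∀ a b : {z : W // BruhatLE cs z w},
        BruhatLE cs a.1 b.1 ↔ (e a).1 ⊆ (e b).1 := by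
  have hl : cs.IsReduced l := by
    show cs.length (cs.wordProd l) = l.length
    rw [hw]
    exact hred
  have hFle : ∀ t : Finset B, BruhatLE cs (cs.wordProd (l.filter (fun a => a ∈ t))) w := by
    intro t
    have := bruhat_of_sublist cs hl hnd [] (l.filter (fun a => a ∈ t)) l
      (List.filter_sublist (l := l)) (by simpa using List.Sublist.refl l)
    simpa [hw] using this
  set F : {t : Finset B // t ⊆ l.toFinset} → {z : W // BruhatLE cs z w} :=
    fun t => ⟨cs.wordProd (l.filter (fun a => a ∈ t.1)), hFle t.1⟩ with hF
  have hinj : Function.Injective F := by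
    intro t t' h
    have h2 : l.filter (fun a => a ∈ t.1) = l.filter (fun a => a ∈ t'.1) :=
      sublist_wordProd_injective' cs hl hnd (l.filter (fun a => a ∈ t.1)).length _ _ le_rfl
        (List.filter_sublist (l := l)) (List.filter_sublist (l := l)) (congrArg Subtype.val h)
    have key : ∀ a, a ∈ t.1 ↔ a ∈ t'.1 := by
      intro a
      have haux : ∀ (s s' : {t : Finset B // t ⊆ l.toFinset}),
          l.filter (fun x => x ∈ s.1) = l.filter (fun x => x ∈ s'.1) →
          a ∈ s.1 → a ∈ s'.1 := by
        intro s s' hss ha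
        have hal : a ∈ l := by
          have := s.2 ha
          simpa using this
        have hmem : a ∈ l.filter (fun x => x ∈ s.1) := by
          rw [List.mem_filter]
          exact ⟨hal, by simpa using ha⟩
        rw [hss] at hmem
        have := (List.mem_filter.mp hmem).2
        simpa using this
      exact ⟨haux t t' h2, haux t' t h2.symm⟩
    exact Subtype.ext (Finset.ext key)
  have hsurj : Function.Surjective F := by
    rintro ⟨z, hz⟩
    obtain ⟨u, hsub, hu⟩ := subword_of_le cs hz l hw
    refine ⟨⟨u.toFinset, ?_⟩, ?_⟩
    · intro a ha
      rw [List.mem_toFinset] at ha ⊢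
      exact hsub.subset ha
    · apply Subtype.ext
      show cs.wordProd (l.filter (fun a => a ∈ u.toFinset)) = z
      have heq : l.filter (fun a => a ∈ u.toFinset) = l.filter (fun a => a ∈ u) :=
        List.filter_congr (fun x _ => by simp [List.mem_toFinset])
      rw [heq, filter_mem_eq_self_of_sublist hsub hnd, hu]
  set e0 := Equiv.ofBijective F ⟨hinj, hsurj⟩ with he0
  refine ⟨e0.symm, ?_⟩
  intro a b
  have ha : F (e0.symm a) = a := e0.apply_symm_apply a
  have hb : F (e0.symm b) = b := e0.apply_symm_apply b
  set t := e0.symm a with hta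
  set t' := e0.symm b with htb
  rw [← ha, ← hb]
  show BruhatLE cs (cs.wordProd (l.filter (fun x => x ∈ t.1)))
      (cs.wordProd (l.filter (fun x => x ∈ t'.1))) ↔ t.1 ⊆ t'.1
  constructor
  · intro h
    obtain ⟨u, hsubu, huprod⟩ := subword_of_le cs h (l.filter (fun x => x ∈ t'.1)) rfl
    have hueq : u = l.filter (fun x => x ∈ t.1) :=
      sublist_wordProd_injective' cs hl hnd u.length u _ le_rfl
        (hsubu.trans (List.filter_sublist (l := l))) (List.filter_sublist (l := l)) huprod
    intro x hx
    have hal : x ∈ l := by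
      have := t.2 hx
      simpa using this
    have hxf : x ∈ l.filter (fun y => y ∈ t.1) := by
      rw [List.mem_filter]
      exact ⟨hal, by simpa using hx⟩
    rw [← hueq] at hxf
    have := hsubu.subset hxf
    have := (List.mem_filter.mp this).2
    simpa using this
  · intro hsub
    have hmono : (l.filter (fun x => x ∈ t.1)).Sublist (l.filter (fun x => x ∈ t'.1)) := by
      apply List.monotone_filter_right
      intro x hx
      simp only [decide_eq_true_eq] at hx ⊢
      exact hsub hx
    have := bruhat_of_sublist cs hl hnd [] _ _ hmono
      (by simpa using List.filter_sublist (p := fun x => x ∈ t'.1) (l := l))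
    simpa using this
end

section
/- In type A_3 with simple reflections r, s, t (Dynkin diagram r—s—t), the pairs (rts, e) and (srts, s) are equivalent under the relation generated by simultaneous left/right descent multiplication, yet the Bruhat intervals [e, rts] and [s, srts] are not isomorphic as posets. -/
/-- One step of the equivalence relation on pairs: simultaneous right multiplication by a
common right descent, or simultaneous left multiplication by a common left descent. -/
def PairStep {B W : Type*} [Group W] {M : CoxeterMatrix B} (cs : CoxeterSystem M W)
    (p q : W × W) : Prop :=
  (∃ i : B, cs.length (p.1 * cs.simple i) < cs.length p.1 ∧
    cs.length (p.2 * cs.simple i) < cs.length p.2 ∧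
    q = (p.1 * cs.simple i, p.2 * cs.simple i)) ∨
  (∃ i : B, cs.length (cs.simple i * p.1) < cs.length p.1 ∧
    cs.length (cs.simple i * p.2) < cs.length p.2 ∧
    q = (cs.simple i * p.1, cs.simple i * p.2))

namespace NonIso


open CoxeterSystem List

def sg : Fin 3 → Equiv.Perm (Fin 4) := fun i => Equiv.swap i.castSucc i.succ

def T6 : List (Equiv.Perm (Fin 4)) := [Equiv.swap 0 1, Equiv.swap 1 2, Equiv.swap 2 3,
  Equiv.swap 0 2, Equiv.swap 1 3, Equiv.swap 0 3]

def ball : ℕ → List (Equiv.Perm (Fin 4))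
  | 0 => [1]
  | n+1 => ball n ++ (ball n).flatMap (fun p => [sg 0 * p, sg 1 * p, sg 2 * p])

variable {W : Type*} [Group W] {M : CoxeterMatrix (Fin 3)} (cs : CoxeterSystem M W)
  (f : W →* Equiv.Perm (Fin 4)) (hf : ∀ i, f (cs.simple i) = sg i)

local notation "HF" => True

lemma one_mem_ball (n : ℕ) : (1 : Equiv.Perm (Fin 4)) ∈ ball n := by
  induction n with
  | zero => simp [ball]
  | succ n ih => exact List.mem_append_left _ ih

include hf in
lemma mem_ball : ∀ (n : ℕ) (ω : List (Fin 3)), ω.length ≤ n → f (cs.wordProd ω) ∈ ball n := by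
  intro n
  induction n with
  | zero =>
    intro ω h
    rw [List.eq_nil_of_length_eq_zero (Nat.le_zero.mp h)]
    simpa using one_mem_ball 0
  | succ n ih =>
    intro ω h
    cases ω with
    | nil => simpa using one_mem_ball (n+1)
    | cons a ρ =>
      have h1 : f (cs.wordProd ρ) ∈ ball n := ih ρ (by simpa using h)
      refine List.mem_append_right _ (List.mem_flatMap.mpr ⟨f (cs.wordProd ρ), h1, ?_⟩)
      rw [cs.wordProd_cons, map_mul, hf]
      fin_cases a <;> simp

include hf in
lemma len_lb (n : ℕ) (x : W) (h : f x ∉ ball n) : n < cs.length x := by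
  by_contra h'
  push_neg at h'
  obtain ⟨ω, hlen, rfl⟩ := cs.exists_reduced_word x
  exact h (mem_ball cs f hf n ω (by have := hlen.eq; omega))

include hf in
lemma refl_mem (t : W) (ht : cs.IsReflection t) : f t ∈ T6 := by
  obtain ⟨w, i, rfl⟩ := ht
  have key : ∀ (p : Equiv.Perm (Fin 4)) (i : Fin 3), p * sg i * p⁻¹ ∈ T6 := by decide
  simpa only [map_mul, map_inv, hf] using key (f w) i

lemma btrans {x y z : W} (h1 : BruhatLE cs x y) (h2 : BruhatLE cs y z) : BruhatLE cs x z := by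
  revert h2
  induction h1 with
  | refl x => exact fun h2 => h2
  | step a b t ht hl h ih => exact fun h2 => BruhatLE.step a z t ht hl (ih h2)

lemma bone {x v : W} (t : W) (ht : cs.IsReflection t) (he : x * t = v)
    (hl : cs.length x < cs.length v) : BruhatLE cs x v :=
  BruhatLE.step x v t ht (by rw [he]; exact hl) (by rw [he]; exact BruhatLE.refl v)

def InS8 (x : W) : Prop := x = 1 ∨ x = cs.simple 0 ∨ x = cs.simple 1 ∨ x = cs.simple 2 ∨
  x = cs.simple 0 * cs.simple 2 ∨ x = cs.simple 0 * cs.simple 1 ∨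
  x = cs.simple 2 * cs.simple 1 ∨ x = cs.simple 0 * cs.simple 2 * cs.simple 1


include hf in
lemma in8_closed (hM02 : M 0 2 = 2) (w t : W) (hw : InS8 cs w) (ht : cs.IsReflection t)
    (hlt : cs.length (w * t) < cs.length w) : InS8 cs (w * t) := by
  have hcomm : cs.simple 2 * cs.simple 0 = cs.simple 0 * cs.simple 2 := by
    have hp := cs.simple_mul_simple_pow 0 2
    rw [hM02] at hp
    have hx : (cs.simple 0 * cs.simple 2) * (cs.simple 0 * cs.simple 2) = 1 := by
      rw [← pow_two]; exact hp
    have h2 := eq_inv_of_mul_eq_one_left hx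
    rw [mul_inv_rev, cs.inv_simple, cs.inv_simple] at h2
    exact h2.symm
  have hub2 : ∀ a b : Fin 3, cs.length (cs.simple a * cs.simple b) ≤ 2 := fun a b =>
    (cs.length_mul_le _ _).trans (by rw [cs.length_simple, cs.length_simple])
  have small : ∀ u : W, cs.length u ≤ 1 → InS8 cs u := by
    intro u hu
    rcases Nat.le_one_iff_eq_zero_or_eq_one.mp hu with h0 | h1
    · exact Or.inl (cs.length_eq_zero_iff.mp h0)
    · obtain ⟨i, rfl⟩ := cs.length_eq_one_iff.mp h1
      fin_cases i
      · exact Or.inr (Or.inl rfl)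
      · exact Or.inr (Or.inr (Or.inl rfl))
      · exact Or.inr (Or.inr (Or.inr (Or.inl rfl)))
  rcases hw with rfl | rfl | rfl | rfl | rfl | rfl | rfl | rfl
  · rw [cs.length_one] at hlt; exact absurd hlt (Nat.not_lt_zero _)
  · rw [cs.length_simple] at hlt; exact small _ (by omega)
  · rw [cs.length_simple] at hlt; exact small _ (by omega)
  · rw [cs.length_simple] at hlt; exact small _ (by omega)
  · exact small _ (by have := hub2 0 2; omega)
  · exact small _ (by have := hub2 0 1; omega)
  · exact small _ (by have := hub2 2 1; omega)
  · -- w = s0 * s2 * s1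
    have hub3 : cs.length (cs.simple 0 * cs.simple 2 * cs.simple 1) ≤ 3 :=
      (cs.length_mul_le _ _).trans (by have := hub2 0 2; rw [cs.length_simple]; omega)
    by_cases hcase : cs.length (cs.simple 0 * cs.simple 2 * cs.simple 1 * t) ≤ 1
    · exact small _ hcase
    · have hl2 : cs.length (cs.simple 0 * cs.simple 2 * cs.simple 1 * t) = 2 := by omega
      obtain ⟨ω, hlen, hprod⟩ :=
        cs.exists_reduced_word (cs.simple 0 * cs.simple 2 * cs.simple 1 * t)
      replace hlen : ω.length = 2 := by rw [← hlen.eq, ← hprod, hl2]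
      have ht6 : f t ∈ T6 := refl_mem cs f hf t ht
      rcases ω with _ | ⟨a, _ | ⟨b, _ | ⟨c, ω⟩⟩⟩
      · simp at hlen
      · simp at hlen
      · have ht' : t = (cs.simple 0 * cs.simple 2 * cs.simple 1)⁻¹ * cs.wordProd [a, b] := by
          rw [← hprod]; group
        have hπ : ∀ (a b : Fin 3), cs.wordProd [a, b] = cs.simple a * cs.simple b := by
          intro a b
          rw [cs.wordProd_cons, cs.wordProd_cons, cs.wordProd_nil, mul_one]
        have hft : f t = (sg 0 * sg 2 * sg 1)⁻¹ * (sg a * sg b) := by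
          rw [ht', hπ]
          simp only [map_mul, map_inv, hf]
        rw [hft] at ht6
        rw [hprod, hπ]
        have hone : ∀ a : Fin 3, cs.simple a * cs.simple a = 1 := cs.simple_mul_simple_self
        fin_cases a <;> fin_cases b
        · exfalso
          apply hcase
          have h1 : cs.simple 0 * cs.simple 2 * cs.simple 1 * t = 1 := by
            rw [hprod, hπ]; exact hone _
          rw [h1, cs.length_one]; omega
        · exact Or.inr (Or.inr (Or.inr (Or.inr (Or.inr (Or.inl rfl)))))
        · exact Or.inr (Or.inr (Or.inr (Or.inr (Or.inl rfl))))
        · exact absurd ht6 (by decide)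
        · exfalso
          apply hcase
          have h1 : cs.simple 0 * cs.simple 2 * cs.simple 1 * t = 1 := by
            rw [hprod, hπ]; exact hone _
          rw [h1, cs.length_one]; omega
        · exact absurd ht6 (by decide)
        · exact Or.inr (Or.inr (Or.inr (Or.inr (Or.inl hcomm))))
        · exact Or.inr (Or.inr (Or.inr (Or.inr (Or.inr (Or.inr (Or.inl rfl))))))
        · exfalso
          apply hcase
          have h1 : cs.simple 0 * cs.simple 2 * cs.simple 1 * t = 1 := by
            rw [hprod, hπ]; exact hone _
          rw [h1, cs.length_one]; omega
      · simp at hlen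

include hf in
lemma below (hM02 : M 0 2 = 2) : ∀ {x y : W}, BruhatLE cs x y →
    y = cs.simple 0 * cs.simple 2 * cs.simple 1 → InS8 cs x := by
  intro x y h
  induction h with
  | refl x =>
    intro hy
    exact Or.inr (Or.inr (Or.inr (Or.inr (Or.inr (Or.inr (Or.inr hy))))))
  | step x y t ht hlt h ih =>
    intro hy
    have h8 := ih hy
    have hx : x * t * t = x := by rw [mul_assoc, ht.mul_self, mul_one]
    have hcl := in8_closed cs f hf hM02 (x*t) t h8 ht (by rw [hx]; exact hlt)
    rwa [hx] at hcl

end NonIso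

/-- In type `A₃` with simple reflections `r = s₀, s = s₁, t = s₂` (Dynkin diagram
`r — s — t`), the pairs `(rts, e)` and `(srts, s)` are equivalent under the relation
generated by simultaneous left/right descent multiplication, yet the Bruhat intervals
`[e, rts]` and `[s, srts]` are not isomorphic as posets. -/
theorem equivalent_pairs_with_nonisomorphic_Bruhat_intervals
    {W : Type*} [Group W] {M : CoxeterMatrix (Fin 3)}
    (hM01 : M 0 1 = 3) (hM12 : M 1 2 = 3) (hM02 : M 0 2 = 2)
    (cs : CoxeterSystem M W) :
    Relation.EqvGen (PairStep cs)
      (cs.simple 0 * cs.simple 2 * cs.simple 1, 1)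
      (cs.simple 1 * cs.simple 0 * cs.simple 2 * cs.simple 1, cs.simple 1) ∧
    ¬ ∃ e : {z : W // BruhatLE cs 1 z ∧ BruhatLE cs z (cs.simple 0 * cs.simple 2 * cs.simple 1)} ≃
        {z : W // BruhatLE cs (cs.simple 1) z ∧
          BruhatLE cs z (cs.simple 1 * cs.simple 0 * cs.simple 2 * cs.simple 1)},
      ∀ a b, BruhatLE cs a.1 b.1 ↔ BruhatLE cs (e a).1 (e b).1 := by
  classical
  have h10 : M 1 0 = 3 := (M.symmetric 1 0).trans hM01
  have h21 : M 2 1 = 3 := (M.symmetric 2 1).trans hM12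
  have h20 : M 2 0 = 2 := (M.symmetric 2 0).trans hM02
  have p00 : (NonIso.sg 0 * NonIso.sg 0) ^ M 0 0 = 1 := by rw [M.diagonal 0]; decide
  have p11 : (NonIso.sg 1 * NonIso.sg 1) ^ M 1 1 = 1 := by rw [M.diagonal 1]; decide
  have p22 : (NonIso.sg 2 * NonIso.sg 2) ^ M 2 2 = 1 := by rw [M.diagonal 2]; decide
  have p01 : (NonIso.sg 0 * NonIso.sg 1) ^ M 0 1 = 1 := by rw [hM01]; decide
  have p12 : (NonIso.sg 1 * NonIso.sg 2) ^ M 1 2 = 1 := by rw [hM12]; decide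
  have p02 : (NonIso.sg 0 * NonIso.sg 2) ^ M 0 2 = 1 := by rw [hM02]; decide
  have p10 : (NonIso.sg 1 * NonIso.sg 0) ^ M 1 0 = 1 := by rw [h10]; decide
  have p21 : (NonIso.sg 2 * NonIso.sg 1) ^ M 2 1 = 1 := by rw [h21]; decide
  have p20 : (NonIso.sg 2 * NonIso.sg 0) ^ M 2 0 = 1 := by rw [h20]; decide
  have hlift : M.IsLiftable NonIso.sg := by
    intro i j
    fin_cases i <;> fin_cases j <;>
      first | exact p00 | exact p11 | exact p22 | exact p01 | exact p12 | exact p02 | exact p10 | exact p21 | exact p20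
  set f := cs.lift ⟨NonIso.sg, hlift⟩ with hfdef
  have hf : ∀ i, f (cs.simple i) = NonIso.sg i := fun i => cs.lift_apply_simple hlift i
  have lb : ∀ (n : ℕ) (x : W), f x ∉ NonIso.ball n → n < cs.length x := NonIso.len_lb cs f hf
  have hub2 : ∀ a b : Fin 3, cs.length (cs.simple a * cs.simple b) ≤ 2 := fun a b =>
    (cs.length_mul_le _ _).trans (by rw [cs.length_simple, cs.length_simple])
  have hub3 : ∀ a b c : Fin 3, cs.length (cs.simple a * cs.simple b * cs.simple c) ≤ 3 :=
    fun a b c => (cs.length_mul_le _ _).trans (by have := hub2 a b; rw [cs.length_simple]; omega)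
  have L1 : cs.length (cs.simple 1) < cs.length (cs.simple 1 * cs.simple 0) := by rw [cs.length_simple]; exact lb 1 _ (by simp only [map_mul, hf]; decide)
  have L2 : cs.length (cs.simple 1) < cs.length (cs.simple 0 * cs.simple 1) := by rw [cs.length_simple]; exact lb 1 _ (by simp only [map_mul, hf]; decide)
  have L3 : cs.length (cs.simple 1) < cs.length (cs.simple 1 * cs.simple 2) := by rw [cs.length_simple]; exact lb 1 _ (by simp only [map_mul, hf]; decide)
  have L4 : cs.length (cs.simple 1) < cs.length (cs.simple 2 * cs.simple 1) := by rw [cs.length_simple]; exact lb 1 _ (by simp only [map_mul, hf]; decide)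
  have L5 : cs.length (cs.simple 1 * cs.simple 0) < cs.length (cs.simple 1 * cs.simple 0 * cs.simple 2) := lt_of_le_of_lt (hub2 1 0) (lb 2 _ (by simp only [map_mul, hf]; decide))
  have L6 : cs.length (cs.simple 1 * cs.simple 0) < cs.length (cs.simple 1 * cs.simple 0 * cs.simple 1) := lt_of_le_of_lt (hub2 1 0) (lb 2 _ (by simp only [map_mul, hf]; decide))
  have L7 : cs.length (cs.simple 1 * cs.simple 2) < cs.length (cs.simple 1 * cs.simple 2 * cs.simple 1) := lt_of_le_of_lt (hub2 1 2) (lb 2 _ (by simp only [map_mul, hf]; decide))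
  have L8 : cs.length (cs.simple 1 * cs.simple 2) < cs.length (cs.simple 1 * cs.simple 0 * cs.simple 2) := lt_of_le_of_lt (hub2 1 2) (lb 2 _ (by simp only [map_mul, hf]; decide))
  have L9 : cs.length (cs.simple 0 * cs.simple 1) < cs.length (cs.simple 0 * cs.simple 2 * cs.simple 1) := lt_of_le_of_lt (hub2 0 1) (lb 2 _ (by simp only [map_mul, hf]; decide))
  have L10 : cs.length (cs.simple 2 * cs.simple 1) < cs.length (cs.simple 0 * cs.simple 2 * cs.simple 1) := lt_of_le_of_lt (hub2 2 1) (lb 2 _ (by simp only [map_mul, hf]; decide))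
  have L11 : cs.length (cs.simple 1 * cs.simple 0 * cs.simple 2) < cs.length (cs.simple 1 * cs.simple 0 * cs.simple 2 * cs.simple 1) := lt_of_le_of_lt (hub3 1 0 2) (lb 3 _ (by simp only [map_mul, hf]; decide))
  have L12 : cs.length (cs.simple 1 * cs.simple 0 * cs.simple 1) < cs.length (cs.simple 1 * cs.simple 0 * cs.simple 2 * cs.simple 1) := lt_of_le_of_lt (hub3 1 0 1) (lb 3 _ (by simp only [map_mul, hf]; decide))
  have L13 : cs.length (cs.simple 1 * cs.simple 2 * cs.simple 1) < cs.length (cs.simple 1 * cs.simple 0 * cs.simple 2 * cs.simple 1) := lt_of_le_of_lt (hub3 1 2 1) (lb 3 _ (by simp only [map_mul, hf]; decide))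
  have L14 : cs.length (cs.simple 0 * cs.simple 2 * cs.simple 1) < cs.length (cs.simple 1 * cs.simple 0 * cs.simple 2 * cs.simple 1) := lt_of_le_of_lt (hub3 0 2 1) (lb 3 _ (by simp only [map_mul, hf]; decide))
  have R0 := cs.isReflection_simple 0
  have R1 := cs.isReflection_simple 1
  have R2 := cs.isReflection_simple 2
  have Rsrs : cs.IsReflection (cs.simple 1 * cs.simple 0 * cs.simple 1) := ⟨cs.simple 1, 0, by rw [cs.inv_simple]⟩
  have Rsts : cs.IsReflection (cs.simple 1 * cs.simple 2 * cs.simple 1) := ⟨cs.simple 1, 2, by rw [cs.inv_simple]⟩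
  have Rtst : cs.IsReflection (cs.simple 2 * cs.simple 0 * cs.simple 2) := ⟨cs.simple 2, 0, by rw [cs.inv_simple]⟩
  have Rb1 : cs.IsReflection (cs.simple 1 * cs.simple 2 * cs.simple 0 * cs.simple 2 * cs.simple 1) :=
    ⟨cs.simple 1 * cs.simple 2, 0, by simp [mul_inv_rev, cs.inv_simple, mul_assoc]⟩
  have Rb2 : cs.IsReflection (cs.simple 1 * cs.simple 2 * cs.simple 0 * cs.simple 1 * cs.simple 0 * cs.simple 2 * cs.simple 1) :=
    ⟨cs.simple 1 * cs.simple 2 * cs.simple 0, 1, by simp [mul_inv_rev, cs.inv_simple, mul_assoc]⟩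
  have C1 : BruhatLE cs (cs.simple 1) (cs.simple 1 * cs.simple 0) := NonIso.bone cs (cs.simple 0) R0 rfl L1
  have C2 : BruhatLE cs (cs.simple 1) (cs.simple 0 * cs.simple 1) := NonIso.bone cs (cs.simple 1 * cs.simple 0 * cs.simple 1) Rsrs (by simp [mul_assoc, cs.simple_mul_simple_cancel_left, cs.simple_mul_simple_self]) L2
  have C3 : BruhatLE cs (cs.simple 1) (cs.simple 1 * cs.simple 2) := NonIso.bone cs (cs.simple 2) R2 rfl L3
  have C4 : BruhatLE cs (cs.simple 1) (cs.simple 2 * cs.simple 1) := NonIso.bone cs (cs.simple 1 * cs.simple 2 * cs.simple 1) Rsts (by simp [mul_assoc, cs.simple_mul_simple_cancel_left, cs.simple_mul_simple_self]) L4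
  have C5 : BruhatLE cs (cs.simple 1 * cs.simple 0) (cs.simple 1 * cs.simple 0 * cs.simple 2) := NonIso.bone cs (cs.simple 2) R2 rfl L5
  have C6 : BruhatLE cs (cs.simple 1 * cs.simple 0) (cs.simple 1 * cs.simple 0 * cs.simple 1) := NonIso.bone cs (cs.simple 1) R1 rfl L6
  have C7 : BruhatLE cs (cs.simple 1 * cs.simple 2) (cs.simple 1 * cs.simple 2 * cs.simple 1) := NonIso.bone cs (cs.simple 1) R1 rfl L7
  have C8 : BruhatLE cs (cs.simple 1 * cs.simple 2) (cs.simple 1 * cs.simple 0 * cs.simple 2) := NonIso.bone cs (cs.simple 2 * cs.simple 0 * cs.simple 2) Rtst (by simp [mul_assoc, cs.simple_mul_simple_cancel_left, cs.simple_mul_simple_self]) L8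
  have C9 : BruhatLE cs (cs.simple 0 * cs.simple 1) (cs.simple 0 * cs.simple 2 * cs.simple 1) := NonIso.bone cs (cs.simple 1 * cs.simple 2 * cs.simple 1) Rsts (by simp [mul_assoc, cs.simple_mul_simple_cancel_left, cs.simple_mul_simple_self]) L9
  have C10 : BruhatLE cs (cs.simple 2 * cs.simple 1) (cs.simple 0 * cs.simple 2 * cs.simple 1) := NonIso.bone cs (cs.simple 1 * cs.simple 2 * cs.simple 0 * cs.simple 2 * cs.simple 1) Rb1 (by simp [mul_assoc, cs.simple_mul_simple_cancel_left, cs.simple_mul_simple_self]) L10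
  have C11 : BruhatLE cs (cs.simple 1 * cs.simple 0 * cs.simple 2) (cs.simple 1 * cs.simple 0 * cs.simple 2 * cs.simple 1) := NonIso.bone cs (cs.simple 1) R1 rfl L11
  have C12 : BruhatLE cs (cs.simple 1 * cs.simple 0 * cs.simple 1) (cs.simple 1 * cs.simple 0 * cs.simple 2 * cs.simple 1) := NonIso.bone cs (cs.simple 1 * cs.simple 2 * cs.simple 1) Rsts (by simp [mul_assoc, cs.simple_mul_simple_cancel_left, cs.simple_mul_simple_self]) L12
  have C13 : BruhatLE cs (cs.simple 1 * cs.simple 2 * cs.simple 1) (cs.simple 1 * cs.simple 0 * cs.simple 2 * cs.simple 1) := NonIso.bone cs (cs.simple 1 * cs.simple 2 * cs.simple 0 * cs.simple 2 * cs.simple 1) Rb1 (by simp [mul_assoc, cs.simple_mul_simple_cancel_left, cs.simple_mul_simple_self]) L13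
  have C14 : BruhatLE cs (cs.simple 0 * cs.simple 2 * cs.simple 1) (cs.simple 1 * cs.simple 0 * cs.simple 2 * cs.simple 1) := NonIso.bone cs (cs.simple 1 * cs.simple 2 * cs.simple 0 * cs.simple 1 * cs.simple 0 * cs.simple 2 * cs.simple 1) Rb2 (by simp [mul_assoc, cs.simple_mul_simple_cancel_left, cs.simple_mul_simple_self]) L14
  have e1 : cs.simple 1 * (cs.simple 1 * cs.simple 0 * cs.simple 2 * cs.simple 1) = cs.simple 0 * cs.simple 2 * cs.simple 1 := by
    simp [mul_assoc, cs.simple_mul_simple_cancel_left]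
  constructor
  · refine Relation.EqvGen.symm _ _ (Relation.EqvGen.rel _ _ (Or.inr ⟨1, ?_, ?_, ?_⟩))
    · dsimp only
      rw [e1]
      exact lt_of_le_of_lt (hub3 0 2 1) (lb 3 _ (by simp only [map_mul, hf]; decide))
    · dsimp only
      rw [cs.simple_mul_simple_self, cs.length_one, cs.length_simple]
      omega
    · dsimp only
      rw [e1, cs.simple_mul_simple_self]
  · rintro ⟨e, -⟩
    have hcond : ∀ z ∈ ({cs.simple 1, cs.simple 1 * cs.simple 0, cs.simple 0 * cs.simple 1, cs.simple 1 * cs.simple 2, cs.simple 2 * cs.simple 1, cs.simple 1 * cs.simple 0 * cs.simple 2, cs.simple 1 * cs.simple 0 * cs.simple 1, cs.simple 1 * cs.simple 2 * cs.simple 1, cs.simple 0 * cs.simple 2 * cs.simple 1} : Finset W),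
        BruhatLE cs (cs.simple 1) z ∧ BruhatLE cs z (cs.simple 1 * cs.simple 0 * cs.simple 2 * cs.simple 1) := by
      intro z hz
      simp only [Finset.mem_insert, Finset.mem_singleton] at hz
      rcases hz with rfl|rfl|rfl|rfl|rfl|rfl|rfl|rfl|rfl
      · exact ⟨BruhatLE.refl _, NonIso.btrans cs C1 (NonIso.btrans cs C5 C11)⟩
      · exact ⟨C1, NonIso.btrans cs C5 C11⟩
      · exact ⟨C2, NonIso.btrans cs C9 C14⟩
      · exact ⟨C3, NonIso.btrans cs C8 C11⟩
      · exact ⟨C4, NonIso.btrans cs C10 C14⟩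
      · exact ⟨NonIso.btrans cs C1 C5, C11⟩
      · exact ⟨NonIso.btrans cs C1 C6, C12⟩
      · exact ⟨NonIso.btrans cs C3 C7, C13⟩
      · exact ⟨NonIso.btrans cs C2 C9, C14⟩
    have hn1 : (cs.simple 1) ∉ ({cs.simple 1 * cs.simple 0, cs.simple 0 * cs.simple 1, cs.simple 1 * cs.simple 2, cs.simple 2 * cs.simple 1, cs.simple 1 * cs.simple 0 * cs.simple 2, cs.simple 1 * cs.simple 0 * cs.simple 1, cs.simple 1 * cs.simple 2 * cs.simple 1, cs.simple 0 * cs.simple 2 * cs.simple 1} : Finset W) := by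
      simp only [Finset.mem_insert, Finset.mem_singleton, not_or]
      and_intros <;>
        (intro h; have h2 := congrArg f h; simp only [map_mul, hf] at h2; exact absurd h2 (by decide))
    have hn2 : (cs.simple 1 * cs.simple 0) ∉ ({cs.simple 0 * cs.simple 1, cs.simple 1 * cs.simple 2, cs.simple 2 * cs.simple 1, cs.simple 1 * cs.simple 0 * cs.simple 2, cs.simple 1 * cs.simple 0 * cs.simple 1, cs.simple 1 * cs.simple 2 * cs.simple 1, cs.simple 0 * cs.simple 2 * cs.simple 1} : Finset W) := by
      simp only [Finset.mem_insert, Finset.mem_singleton, not_or]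
      and_intros <;>
        (intro h; have h2 := congrArg f h; simp only [map_mul, hf] at h2; exact absurd h2 (by decide))
    have hn3 : (cs.simple 0 * cs.simple 1) ∉ ({cs.simple 1 * cs.simple 2, cs.simple 2 * cs.simple 1, cs.simple 1 * cs.simple 0 * cs.simple 2, cs.simple 1 * cs.simple 0 * cs.simple 1, cs.simple 1 * cs.simple 2 * cs.simple 1, cs.simple 0 * cs.simple 2 * cs.simple 1} : Finset W) := by
      simp only [Finset.mem_insert, Finset.mem_singleton, not_or]
      and_intros <;>
        (intro h; have h2 := congrArg f h; simp only [map_mul, hf] at h2; exact absurd h2 (by decide))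
    have hn4 : (cs.simple 1 * cs.simple 2) ∉ ({cs.simple 2 * cs.simple 1, cs.simple 1 * cs.simple 0 * cs.simple 2, cs.simple 1 * cs.simple 0 * cs.simple 1, cs.simple 1 * cs.simple 2 * cs.simple 1, cs.simple 0 * cs.simple 2 * cs.simple 1} : Finset W) := by
      simp only [Finset.mem_insert, Finset.mem_singleton, not_or]
      and_intros <;>
        (intro h; have h2 := congrArg f h; simp only [map_mul, hf] at h2; exact absurd h2 (by decide))
    have hn5 : (cs.simple 2 * cs.simple 1) ∉ ({cs.simple 1 * cs.simple 0 * cs.simple 2, cs.simple 1 * cs.simple 0 * cs.simple 1, cs.simple 1 * cs.simple 2 * cs.simple 1, cs.simple 0 * cs.simple 2 * cs.simple 1} : Finset W) := by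
      simp only [Finset.mem_insert, Finset.mem_singleton, not_or]
      and_intros <;>
        (intro h; have h2 := congrArg f h; simp only [map_mul, hf] at h2; exact absurd h2 (by decide))
    have hn6 : (cs.simple 1 * cs.simple 0 * cs.simple 2) ∉ ({cs.simple 1 * cs.simple 0 * cs.simple 1, cs.simple 1 * cs.simple 2 * cs.simple 1, cs.simple 0 * cs.simple 2 * cs.simple 1} : Finset W) := by
      simp only [Finset.mem_insert, Finset.mem_singleton, not_or]
      and_intros <;>
        (intro h; have h2 := congrArg f h; simp only [map_mul, hf] at h2; exact absurd h2 (by decide))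
    have hn7 : (cs.simple 1 * cs.simple 0 * cs.simple 1) ∉ ({cs.simple 1 * cs.simple 2 * cs.simple 1, cs.simple 0 * cs.simple 2 * cs.simple 1} : Finset W) := by
      simp only [Finset.mem_insert, Finset.mem_singleton, not_or]
      and_intros <;>
        (intro h; have h2 := congrArg f h; simp only [map_mul, hf] at h2; exact absurd h2 (by decide))
    have hn8 : (cs.simple 1 * cs.simple 2 * cs.simple 1) ∉ ({cs.simple 0 * cs.simple 2 * cs.simple 1} : Finset W) := by
      simp only [Finset.mem_insert, Finset.mem_singleton, not_or]
      and_intros <;>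
        (intro h; have h2 := congrArg f h; simp only [map_mul, hf] at h2; exact absurd h2 (by decide))
    have hcard : ({cs.simple 1, cs.simple 1 * cs.simple 0, cs.simple 0 * cs.simple 1, cs.simple 1 * cs.simple 2, cs.simple 2 * cs.simple 1, cs.simple 1 * cs.simple 0 * cs.simple 2, cs.simple 1 * cs.simple 0 * cs.simple 1, cs.simple 1 * cs.simple 2 * cs.simple 1, cs.simple 0 * cs.simple 2 * cs.simple 1} : Finset W).card = 9 := by
      rw [Finset.card_insert_of_notMem hn1, Finset.card_insert_of_notMem hn2, Finset.card_insert_of_notMem hn3, Finset.card_insert_of_notMem hn4, Finset.card_insert_of_notMem hn5, Finset.card_insert_of_notMem hn6, Finset.card_insert_of_notMem hn7, Finset.card_insert_of_notMem hn8, Finset.card_singleton]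
    have hF8 : ({1, cs.simple 0, cs.simple 1, cs.simple 2, cs.simple 0 * cs.simple 2, cs.simple 0 * cs.simple 1, cs.simple 2 * cs.simple 1, cs.simple 0 * cs.simple 2 * cs.simple 1} : Finset W).card ≤ 8 := by
      have a1 := Finset.card_insert_le (1) ({cs.simple 0, cs.simple 1, cs.simple 2, cs.simple 0 * cs.simple 2, cs.simple 0 * cs.simple 1, cs.simple 2 * cs.simple 1, cs.simple 0 * cs.simple 2 * cs.simple 1} : Finset W)
      have a2 := Finset.card_insert_le (cs.simple 0) ({cs.simple 1, cs.simple 2, cs.simple 0 * cs.simple 2, cs.simple 0 * cs.simple 1, cs.simple 2 * cs.simple 1, cs.simple 0 * cs.simple 2 * cs.simple 1} : Finset W)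
      have a3 := Finset.card_insert_le (cs.simple 1) ({cs.simple 2, cs.simple 0 * cs.simple 2, cs.simple 0 * cs.simple 1, cs.simple 2 * cs.simple 1, cs.simple 0 * cs.simple 2 * cs.simple 1} : Finset W)
      have a4 := Finset.card_insert_le (cs.simple 2) ({cs.simple 0 * cs.simple 2, cs.simple 0 * cs.simple 1, cs.simple 2 * cs.simple 1, cs.simple 0 * cs.simple 2 * cs.simple 1} : Finset W)
      have a5 := Finset.card_insert_le (cs.simple 0 * cs.simple 2) ({cs.simple 0 * cs.simple 1, cs.simple 2 * cs.simple 1, cs.simple 0 * cs.simple 2 * cs.simple 1} : Finset W)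
      have a6 := Finset.card_insert_le (cs.simple 0 * cs.simple 1) ({cs.simple 2 * cs.simple 1, cs.simple 0 * cs.simple 2 * cs.simple 1} : Finset W)
      have a7 := Finset.card_insert_le (cs.simple 2 * cs.simple 1) ({cs.simple 0 * cs.simple 2 * cs.simple 1} : Finset W)
      have a8 : ({cs.simple 0 * cs.simple 2 * cs.simple 1} : Finset W).card = 1 := Finset.card_singleton _
      omega
    have hmain := Finset.card_le_card_of_injOn
      (s := ({cs.simple 1, cs.simple 1 * cs.simple 0, cs.simple 0 * cs.simple 1, cs.simple 1 * cs.simple 2, cs.simple 2 * cs.simple 1, cs.simple 1 * cs.simple 0 * cs.simple 2, cs.simple 1 * cs.simple 0 * cs.simple 1, cs.simple 1 * cs.simple 2 * cs.simple 1, cs.simple 0 * cs.simple 2 * cs.simple 1} : Finset W)) (t := ({1, cs.simple 0, cs.simple 1, cs.simple 2, cs.simple 0 * cs.simple 2, cs.simple 0 * cs.simple 1, cs.simple 2 * cs.simple 1, cs.simple 0 * cs.simple 2 * cs.simple 1} : Finset W))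
      (fun z => if h : BruhatLE cs (cs.simple 1) z ∧ BruhatLE cs z (cs.simple 1 * cs.simple 0 * cs.simple 2 * cs.simple 1) then
          (e.symm ⟨z, h⟩).1 else 1) ?_ ?_
    · rw [hcard] at hmain
      omega
    · intro z hz
      have hc := hcond z hz
      simp only [dif_pos hc]
      have h8 := NonIso.below cs f hf hM02 (e.symm ⟨z, hc⟩).2.2 rfl
      simp only [Finset.mem_coe, Finset.mem_insert, Finset.mem_singleton]
      exact h8
    · intro z1 hz1 z2 hz2 hzz
      have hc1 := hcond z1 (Finset.mem_coe.mp hz1)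
      have hc2 := hcond z2 (Finset.mem_coe.mp hz2)
      simp only [dif_pos hc1, dif_pos hc2] at hzz
      exact congrArg Subtype.val (e.symm.injective (Subtype.ext hzz))
end
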